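/- arXiv:math/0611063 — 8 statements merged into one kernel-verified Lean document; each statement's English description precedes it below -/
import Mathlib

section
/- Let π be a Hermitian projection of ℂⁿ with real entries (π̄ = π) and let z = is with s ∈ ℝ \ {0}. Then g_{z,π}(λ) = π + ((λ - z̄)/(λ - z))(I - π) satisfies the σ-reality condition g_{z,π}(-λ)ᵗ · g_{z,π}(λ) = I. -/
open Matrix

/-- The simple element `g_{z,π}(λ) = π + ((λ - z̄)/(λ - z))(I - π)`. -/
noncomputable def gSimple {n : ℕ} (z : ℂ) (P : Matrix (Fin n) (Fin n) ℂ) (lam : ℂ) :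
    Matrix (Fin n) (Fin n) ℂ :=
  P + ((lam - (starRingEnd ℂ) z) / (lam - z)) • ((1 : Matrix (Fin n) (Fin n) ℂ) - P)

theorem stmt_2 {n : ℕ} (P : Matrix (Fin n) (Fin n) ℂ) (hP : P * P = P) (hPherm : Pᴴ = P)
    (hPreal : P.map (starRingEnd ℂ) = P) (s : ℝ) (hs : s ≠ 0) (lam : ℂ)
    (h1 : lam ≠ Complex.I * s) (h2 : -lam ≠ Complex.I * s) :
    (gSimple (Complex.I * s) P (-lam))ᵀ * gSimple (Complex.I * s) P lam = 1 := by
  have hPt : Pᵀ = P := by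
    have : Pᴴ = (P.map (starRingEnd ℂ))ᵀ := rfl
    rw [hPreal] at this
    rw [← this, hPherm]
  set z : ℂ := Complex.I * s with hz
  have hd1 : lam - z ≠ 0 := sub_ne_zero.mpr h1
  have hd2 : -lam - z ≠ 0 := sub_ne_zero.mpr h2
  have hzc : (starRingEnd ℂ) z = -z := by
    simp [hz, Complex.conj_I, mul_comm]
  have hcc : ((-lam - (starRingEnd ℂ) z) / (-lam - z)) *
      ((lam - (starRingEnd ℂ) z) / (lam - z)) = 1 := by
    rw [hzc]
    field_simp
    ring
  have hQ : ((1 : Matrix (Fin n) (Fin n) ℂ) - P) * (1 - P) = 1 - P := by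
    noncomm_ring [hP]
  have hPQ : P * ((1 : Matrix (Fin n) (Fin n) ℂ) - P) = 0 := by
    noncomm_ring [hP]
  have hQP : ((1 : Matrix (Fin n) (Fin n) ℂ) - P) * P = 0 := by
    noncomm_ring [hP]
  unfold gSimple
  rw [transpose_add, transpose_smul, transpose_sub, transpose_one, hPt]
  rw [add_mul, mul_add, mul_add, smul_mul_assoc, smul_mul_assoc, mul_smul_comm,
    mul_smul_comm, hP, hPQ, hQP, hQ, smul_zero, smul_zero, smul_smul, hcc, one_smul]
  abel
end

section
/- Conversely, if z ∈ ℂ \ ℝ and π is a Hermitian projection with 0 < rank π < n, and g_{z,π}(λ) = π + ((λ - z̄)/(λ - z))(I - π) satisfies g_{z,π}(-λ)ᵗ g_{z,π}(λ) = I for all λ in its domain, then z is purely imaginary and π̄ = π. -/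
open Matrix

/-!
Evaluate at `λ = 0`: there `g(0) = π + a(I - π)` with
`a = z̄ / z ≠ 1`, and with `ρ = πᵗ` (again a projection) the identity reads
`(ρ + a(I - ρ))(π + a(I - π)) = I`. Multiplying by `ρ` on the left gives `ρ(I - π) = 0`;
multiplying by `I - ρ` on the left and `π` on the right gives `(I - ρ)π = 0`; hence `ρ = π`.
The identity then collapses to `π + a²(I - π) = I`, so `a² = 1` as `π ≠ I`, i.e. `z̄ = -z`.
Finally `π̄ = (πᴴ)ᵗ = πᵗ = π`.
-/

theorem eq_zero_of_smul_eq_self {K M : Type*} [Field K] [AddCommGroup M] [Module K M] {a : K}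
    {x : M} (ha : a ≠ 1) (h : a • x = x) : x = 0 := by
  refine (smul_eq_zero.mp ?_).resolve_left (sub_ne_zero.mpr ha)
  rw [sub_smul, one_smul, h, sub_self]

section IdempotentPencil

variable {K A : Type*} [Field K] [Ring A] [Algebra K A] {P Q : A} {a b : K}

theorem IsIdempotentElem.add_smul_one_sub_mul_self (hP : IsIdempotentElem P) :
    (P + a • (1 - P)) * P = P := by
  rw [add_mul, hP.eq, smul_mul_assoc, hP.one_sub_mul_self, smul_zero, add_zero]

theorem IsIdempotentElem.add_smul_one_sub_mul_one_sub (hP : IsIdempotentElem P) :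
    (P + a • (1 - P)) * (1 - P) = a • (1 - P) := by
  rw [add_mul, hP.mul_one_sub_self, smul_mul_assoc, hP.one_sub.eq, zero_add]

theorem IsIdempotentElem.mul_add_smul_one_sub (hP : IsIdempotentElem P) :
    P * (P + a • (1 - P)) = P := by
  rw [mul_add, hP.eq, mul_smul_comm, hP.mul_one_sub_self, smul_zero, add_zero]

theorem IsIdempotentElem.one_sub_mul_add_smul_one_sub (hP : IsIdempotentElem P) :
    (1 - P) * (P + a • (1 - P)) = a • (1 - P) := by
  rw [mul_add, hP.one_sub_mul_self, mul_smul_comm, hP.one_sub.eq, zero_add]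

theorem IsIdempotentElem.add_smul_one_sub_mul_add_smul_one_sub (hP : IsIdempotentElem P) :
    (P + b • (1 - P)) * (P + a • (1 - P)) = P + (b * a) • (1 - P) := by
  rw [add_mul, hP.mul_add_smul_one_sub, smul_mul_assoc, hP.one_sub_mul_add_smul_one_sub,
    smul_smul]

theorem IsIdempotentElem.eq_of_add_smul_one_sub_mul_eq_one (hP : IsIdempotentElem P)
    (hQ : IsIdempotentElem Q) (ha : a ≠ 1) (hb : b ≠ 1)
    (h : (Q + b • (1 - Q)) * (P + a • (1 - P)) = 1) : Q = P := by
  have hQ_left : Q * (1 - P) = 0 := by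
    refine eq_zero_of_smul_eq_self ha ?_
    calc a • (Q * (1 - P))
        = Q * (Q + b • (1 - Q)) * (P + a • (1 - P)) * (1 - P) := by
          rw [hQ.mul_add_smul_one_sub, mul_assoc, hP.add_smul_one_sub_mul_one_sub, mul_smul_comm]
      _ = Q * (1 - P) := by rw [mul_assoc Q, h, mul_one]
  have hP_right : (1 - Q) * P = 0 := by
    refine eq_zero_of_smul_eq_self hb ?_
    calc b • ((1 - Q) * P)
        = (1 - Q) * (Q + b • (1 - Q)) * (P + a • (1 - P)) * P := by
          rw [hQ.one_sub_mul_add_smul_one_sub, mul_assoc, hP.add_smul_one_sub_mul_self,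
            smul_mul_assoc]
      _ = (1 - Q) * P := by rw [mul_assoc (1 - Q), h, mul_one]
  rw [mul_one_sub, sub_eq_zero] at hQ_left
  rw [one_sub_mul, sub_eq_zero] at hP_right
  exact hQ_left.trans hP_right.symm

end IdempotentPencil

theorem Complex.re_eq_zero_of_conj_div_mul_self_eq_one {z : ℂ} (hz : z.im ≠ 0)
    (h : starRingEnd ℂ z / z * (starRingEnd ℂ z / z) = 1) : z.re = 0 := by
  have hz0 : z ≠ 0 := fun h0 => hz (by simp [h0])
  have hsq : starRingEnd ℂ z ^ 2 = z ^ 2 := by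
    field_simp at h
    exact h
  have hneg : starRingEnd ℂ z = -z :=
    (sq_eq_sq_iff_eq_or_eq_neg.mp hsq).resolve_left (mt Complex.conj_eq_iff_im.mp hz)
  have hre := congrArg Complex.re hneg
  rw [Complex.conj_re, Complex.neg_re] at hre
  linarith

theorem Matrix.map_conj_eq_transpose_conjTranspose {n : Type*} (P : Matrix n n ℂ) :
    P.map (starRingEnd ℂ) = Pᴴᵀ := by
  ext i j
  simp

theorem stmt_3_general {n : ℕ} (P : Matrix (Fin n) (Fin n) ℂ) (hP : P * P = P) (hPherm : Pᴴ = P)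
    (hP1 : P ≠ 1) (z : ℂ) (hz : z.im ≠ 0)
    (hσ : ∀ lam : ℂ, lam ≠ z → lam ≠ (starRingEnd ℂ) z → -lam ≠ z → -lam ≠ (starRingEnd ℂ) z →
      (gSimple z P (-lam))ᵀ * gSimple z P lam = 1) :
    z.re = 0 ∧ P.map (starRingEnd ℂ) = P := by
  have hz0 : (0 : ℂ) ≠ z := fun h => hz (by simp [← h])
  have hw0 : (0 : ℂ) ≠ starRingEnd ℂ z := fun h => hz (by simpa using congrArg Complex.im h)
  set a := starRingEnd ℂ z / z
  have ha : a ≠ 1 := by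
    rw [Ne, div_eq_one_iff_eq hz0.symm]
    exact mt Complex.conj_eq_iff_im.mp hz
  have hid : IsIdempotentElem P := hP
  have hidT : IsIdempotentElem Pᵀ := by rw [IsIdempotentElem, ← transpose_mul, hP]
  have h0 : (Pᵀ + a • (1 - Pᵀ)) * (P + a • (1 - P)) = 1 := by
    have := hσ 0 hz0 hw0 (by rwa [neg_zero]) (by rwa [neg_zero])
    simpa [gSimple, a] using this
  have hPT : Pᵀ = P := hid.eq_of_add_smul_one_sub_mul_eq_one hidT ha ha h0
  rw [hPT, hid.add_smul_one_sub_mul_add_smul_one_sub] at h0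
  have haa : (a * a) • (1 - P) = (1 : ℂ) • (1 - P) := by
    rw [one_smul, ← add_right_inj P, h0, add_sub_cancel]
  refine ⟨Complex.re_eq_zero_of_conj_div_mul_self_eq_one hz ?_, ?_⟩
  · exact smul_left_injective ℂ (sub_ne_zero.mpr hP1.symm) haa
  · rw [map_conj_eq_transpose_conjTranspose, hPherm, hPT]

theorem stmt_3 {n : ℕ} (P : Matrix (Fin n) (Fin n) ℂ) (hP : P * P = P) (hPherm : Pᴴ = P)
    (hP0 : P ≠ 0) (hP1 : P ≠ 1) (z : ℂ) (hz : z.im ≠ 0)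
    (hσ : ∀ lam : ℂ, lam ≠ z → lam ≠ (starRingEnd ℂ) z → -lam ≠ z → -lam ≠ (starRingEnd ℂ) z →
      (gSimple z P (-lam))ᵀ * gSimple z P lam = 1) :
    z.re = 0 ∧ P.map (starRingEnd ℂ) = P :=
  stmt_3_general P hP hPherm hP1 z hz hσ
end

section
/- Let α₁ ≠ α₂ be complex numbers, π a projection matrix (π²=π) with V₁ = Im π and V₂ = Im(I-π), and f: ℂ → GL(n,ℂ) holomorphic. If f(α₁)⁻¹(V₁) ∩ f(α₂)⁻¹(V₂) = {0}, then ℂⁿ = f(α₁)⁻¹(V₁) ⊕ f(α₂)⁻¹(V₂); let π̃ be the projection onto f(α₁)⁻¹(V₁) along f(α₂)⁻¹(V₂). Then the matrix-valued function f̃(λ) = g_{α₁,α₂,π}(λ) f(λ) g_{α₁,α₂,π̃}(λ)⁻¹ extends holomorphically to λ = α₁ and λ = α₂, i.e. its residues at α₁ and α₂ vanish. -/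
open Matrix Filter Topology

private lemma finrank_comap_eq_aux {n : ℕ} (M : Matrix (Fin n) (Fin n) ℂ) (hM : IsUnit M)
    (S : Submodule ℂ (Fin n → ℂ)) :
    Module.finrank ℂ (Submodule.comap M.mulVecLin S) = Module.finrank ℂ S := by
  have : Invertible M := hM.invertible
  let e := M.toLinearEquiv' this
  have he : (e : (Fin n → ℂ) →ₗ[ℂ] (Fin n → ℂ)) = M.mulVecLin := by
    ext v
    simp [e, Matrix.toLinearEquiv', Matrix.toLin'_apply, Matrix.mulVecLin_apply]
  rw [← he, Submodule.comap_equiv_eq_map_symm]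
  exact LinearEquiv.finrank_map_eq e.symm S

private lemma mat_eq_zero_of_mulVec {n : ℕ} (M : Matrix (Fin n) (Fin n) ℂ)
    (h : ∀ v, M.mulVec v = 0) : M = 0 := by
  ext i j
  have := congrFun (h (Pi.single j 1)) i
  simpa using this


private lemma tendsto_resid_aux {n : ℕ} (G F : ℂ → Matrix (Fin n) (Fin n) ℂ)
    (hG : Continuous G) (β γ : ℂ) (hβγ : β ≠ γ) (h0 : G β = 0)
    (hFG : ∀ lam, lam ≠ β → lam ≠ γ → F lam = (lam - γ)⁻¹ • G lam) :
    Filter.Tendsto F (nhdsWithin β {β}ᶜ) (nhds 0) := by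
  have hev : ∀ᶠ lam in nhdsWithin β {β}ᶜ, (lam - γ)⁻¹ • G lam = F lam := by
    filter_upwards [self_mem_nhdsWithin,
      Filter.Eventually.filter_mono nhdsWithin_le_nhds (eventually_ne_nhds hβγ)] with lam h1 h2
    exact (hFG lam h1 h2).symm
  have hct : Filter.Tendsto (fun lam => (lam - γ)⁻¹ • G lam) (nhdsWithin β {β}ᶜ) (nhds 0) := by
    have hc : ContinuousAt (fun lam => (lam - γ)⁻¹ • G lam) β := by
      exact (((continuousAt_id.sub continuousAt_const).inv₀
        (sub_ne_zero.mpr hβγ)).smul hG.continuousAt)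
    have := hc.tendsto
    rw [h0, smul_zero] at this
    exact this.mono_left nhdsWithin_le_nhds
  exact Filter.Tendsto.congr' hev hct

theorem stmt_4 {n : ℕ} (P Pt : Matrix (Fin n) (Fin n) ℂ)
    (hP : P * P = P) (hPt : Pt * Pt = Pt)
    (α₁ α₂ : ℂ) (hα : α₁ ≠ α₂)
    (f : ℂ → Matrix (Fin n) (Fin n) ℂ) (hf : ∀ i j, Differentiable ℂ (fun lam => f lam i j))
    (hfinv : ∀ lam, IsUnit (f lam))
    (V₁ V₂ : Submodule ℂ (Fin n → ℂ))
    (hV₁ : V₁ = Submodule.comap (f α₁).mulVecLin (LinearMap.range P.mulVecLin))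
    (hV₂ : V₂ = Submodule.comap (f α₂).mulVecLin
      (LinearMap.range ((1 : Matrix (Fin n) (Fin n) ℂ) - P).mulVecLin))
    (hcap : V₁ ⊓ V₂ = ⊥)
    -- Pt is the projection onto V₁ = f(α₁)⁻¹(Im π) along V₂ = f(α₂)⁻¹(Im (I-π))
    (hPtV₁ : ∀ v ∈ V₁, Pt.mulVec v = v) (hPtV₂ : ∀ v ∈ V₂, Pt.mulVec v = 0) :
    -- direct sum decomposition ℂⁿ = V₁ ⊕ V₂, and the residues of
    -- f̃(λ) = g_{α₁,α₂,π}(λ) f(λ) g_{α₁,α₂,π̃}(λ)⁻¹ at α₁ and α₂ vanish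
    V₁ ⊔ V₂ = ⊤ ∧
    Tendsto (fun lam : ℂ => (lam - α₁) •
        ((P + ((lam - α₂) / (lam - α₁)) • ((1 : Matrix (Fin n) (Fin n) ℂ) - P)) * f lam *
          (Pt + ((lam - α₁) / (lam - α₂)) • ((1 : Matrix (Fin n) (Fin n) ℂ) - Pt))))
      (𝓝[≠] α₁) (𝓝 0) ∧
    Tendsto (fun lam : ℂ => (lam - α₂) •
        ((P + ((lam - α₂) / (lam - α₁)) • ((1 : Matrix (Fin n) (Fin n) ℂ) - P)) * f lam *
          (Pt + ((lam - α₁) / (lam - α₂)) • ((1 : Matrix (Fin n) (Fin n) ℂ) - Pt))))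
      (𝓝[≠] α₂) (𝓝 0) := by
  set Q : Matrix (Fin n) (Fin n) ℂ := (1 : Matrix (Fin n) (Fin n) ℂ) - P with hQ
  set S₁ := LinearMap.range P.mulVecLin with hS₁
  set S₂ := LinearMap.range Q.mulVecLin with hS₂
  -- ranges of P and 1 - P are complementary
  have hSsup : S₁ ⊔ S₂ = ⊤ := by
    rw [eq_top_iff]
    intro v _
    have hv : v = P.mulVec v + Q.mulVec v := by
      rw [← Matrix.add_mulVec, hQ]; simp
    rw [hv]
    exact Submodule.add_mem_sup ⟨v, rfl⟩ ⟨v, rfl⟩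
  have hSinf : S₁ ⊓ S₂ = ⊥ := by
    rw [eq_bot_iff]
    rintro v ⟨⟨x, hx⟩, ⟨y, hy⟩⟩
    simp only [Matrix.mulVecLin_apply] at hx hy
    have h1 : P.mulVec v = v := by
      rw [← hx, Matrix.mulVec_mulVec, hP]
    have h2 : P.mulVec v = 0 := by
      rw [← hy, Matrix.mulVec_mulVec, hQ, Matrix.mul_sub, hP, Matrix.mul_one, sub_self,
        Matrix.zero_mulVec]
    rw [Submodule.mem_bot, ← h1, h2]
  -- dimension count
  have hdim : Module.finrank ℂ S₁ + Module.finrank ℂ S₂ = n := by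
    have := Submodule.finrank_sup_add_finrank_inf_eq S₁ S₂
    rw [hSsup, hSinf, finrank_top, finrank_bot, add_zero] at this
    rw [← this]
    simp [Module.finrank_pi]
  have hdV₁ : Module.finrank ℂ V₁ = Module.finrank ℂ S₁ := by
    rw [hV₁]; exact finrank_comap_eq_aux _ (hfinv α₁) _
  have hdV₂ : Module.finrank ℂ V₂ = Module.finrank ℂ S₂ := by
    rw [hV₂]; exact finrank_comap_eq_aux _ (hfinv α₂) _
  have htop : V₁ ⊔ V₂ = ⊤ := by
    apply Submodule.eq_top_of_finrank_eq
    have := Submodule.finrank_sup_add_finrank_inf_eq V₁ V₂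
    rw [hcap, finrank_bot, add_zero, hdV₁, hdV₂, hdim] at this
    rw [this]
    simp [Module.finrank_pi]
  refine ⟨htop, ?_, ?_⟩ <;>
  · -- the two key matrix identities
    set Qt : Matrix (Fin n) (Fin n) ℂ := (1 : Matrix (Fin n) (Fin n) ℂ) - Pt with hQt
    have hA : Q * f α₁ * Pt = 0 := by
      apply mat_eq_zero_of_mulVec
      intro v
      obtain ⟨v₁, hv₁, v₂, hv₂, rfl⟩ := Submodule.mem_sup.mp
        (htop ▸ Submodule.mem_top : v ∈ V₁ ⊔ V₂)
      have hptv : Pt.mulVec (v₁ + v₂) = v₁ := by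
        rw [Matrix.mulVec_add, hPtV₁ v₁ hv₁, hPtV₂ v₂ hv₂, add_zero]
      have hmem : (f α₁).mulVec v₁ ∈ S₁ := by
        have := hV₁ ▸ hv₁
        simpa [Matrix.mulVecLin_apply] using this
      obtain ⟨w, hw⟩ := hmem
      simp only [Matrix.mulVecLin_apply] at hw
      calc (Q * f α₁ * Pt).mulVec (v₁ + v₂)
          = Q.mulVec ((f α₁).mulVec (Pt.mulVec (v₁ + v₂))) := by
            rw [Matrix.mulVec_mulVec, Matrix.mulVec_mulVec]
        _ = Q.mulVec (P.mulVec w) := by rw [hptv, ← hw]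
        _ = 0 := by
            rw [Matrix.mulVec_mulVec, hQ, Matrix.sub_mul, Matrix.one_mul, hP, sub_self,
              Matrix.zero_mulVec]
    have hB : P * f α₂ * Qt = 0 := by
      apply mat_eq_zero_of_mulVec
      intro v
      obtain ⟨v₁, hv₁, v₂, hv₂, rfl⟩ := Submodule.mem_sup.mp
        (htop ▸ Submodule.mem_top : v ∈ V₁ ⊔ V₂)
      have hptv : Qt.mulVec (v₁ + v₂) = v₂ := by
        rw [hQt, Matrix.sub_mulVec, Matrix.one_mulVec, Matrix.mulVec_add, hPtV₁ v₁ hv₁,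
          hPtV₂ v₂ hv₂, add_zero]
        abel
      have hmem : (f α₂).mulVec v₂ ∈ S₂ := by
        have := hV₂ ▸ hv₂
        simpa [Matrix.mulVecLin_apply] using this
      obtain ⟨w, hw⟩ := hmem
      simp only [Matrix.mulVecLin_apply] at hw
      calc (P * f α₂ * Qt).mulVec (v₁ + v₂)
          = P.mulVec ((f α₂).mulVec (Qt.mulVec (v₁ + v₂))) := by
            rw [Matrix.mulVec_mulVec, Matrix.mulVec_mulVec]
        _ = P.mulVec (Q.mulVec w) := by rw [hptv, ← hw]
        _ = 0 := by
            rw [Matrix.mulVec_mulVec, hQ, Matrix.mul_sub, Matrix.mul_one, hP, sub_self,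
              Matrix.zero_mulVec]
    have hfc : Continuous f := continuous_matrix fun i j => (hf i j).continuous
    set G : ℂ → Matrix (Fin n) (Fin n) ℂ := fun lam =>
      ((lam - α₁) • P + (lam - α₂) • Q) * f lam * ((lam - α₂) • Pt + (lam - α₁) • Qt) with hGdef
    have hGc : Continuous G := by
      apply Continuous.matrix_mul
      apply Continuous.matrix_mul
      · exact ((continuous_id.sub continuous_const).smul continuous_const).add
          ((continuous_id.sub continuous_const).smul continuous_const)
      · exact hfc
      · exact ((continuous_id.sub continuous_const).smul continuous_const).add
          ((continuous_id.sub continuous_const).smul continuous_const)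
    have hkey : ∀ lam, lam ≠ α₁ → lam ≠ α₂ →
        (P + ((lam - α₂) / (lam - α₁)) • Q) * f lam *
          (Pt + ((lam - α₁) / (lam - α₂)) • Qt)
        = ((lam - α₁)⁻¹ * (lam - α₂)⁻¹) • G lam := by
      intro lam h1 h2
      have ha : lam - α₁ ≠ 0 := sub_ne_zero.mpr h1
      have hb : lam - α₂ ≠ 0 := sub_ne_zero.mpr h2
      have e1 : P + ((lam - α₂) / (lam - α₁)) • Q
          = (lam - α₁)⁻¹ • ((lam - α₁) • P + (lam - α₂) • Q) := by
        rw [smul_add, smul_smul, smul_smul, inv_mul_cancel₀ ha, one_smul, div_eq_inv_mul]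
      have e2 : Pt + ((lam - α₁) / (lam - α₂)) • Qt
          = (lam - α₂)⁻¹ • ((lam - α₂) • Pt + (lam - α₁) • Qt) := by
        rw [smul_add, smul_smul, smul_smul, inv_mul_cancel₀ hb, one_smul, div_eq_inv_mul]
      rw [e1, e2, hGdef]
      rw [Matrix.smul_mul, Matrix.smul_mul, Matrix.mul_smul, smul_smul]
    have hG1 : G α₁ = 0 := by
      rw [hGdef]
      simp only [sub_self, zero_smul, zero_add, add_zero, Matrix.smul_mul, Matrix.mul_smul]
      rw [hA]
      simp
    have hG2 : G α₂ = 0 := by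
      rw [hGdef]
      simp only [sub_self, zero_smul, zero_add, add_zero, Matrix.smul_mul, Matrix.mul_smul]
      rw [hB]
      simp
    first
    | · apply tendsto_resid_aux G _ hGc α₁ α₂ hα hG1
        intro lam h1 h2
        have ha : lam - α₁ ≠ 0 := sub_ne_zero.mpr h1
        have hb : lam - α₂ ≠ 0 := sub_ne_zero.mpr h2
        rw [hkey lam h1 h2, smul_smul]
        congr 1
        field_simp
        try ring
    | · apply tendsto_resid_aux G _ hGc α₂ α₁ hα.symm hG2
        intro lam h2 h1
        have ha : lam - α₁ ≠ 0 := sub_ne_zero.mpr h1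
        have hb : lam - α₂ ≠ 0 := sub_ne_zero.mpr h2
        rw [hkey lam h1 h2, smul_smul]
        congr 1
        field_simp
        try ring
end

section
/- Let z₁, z₂ ∈ ℂ \ ℝ with z₁ ∉ {z₂, z̄₂}, and π₁, π₂ Hermitian projections. Let ρ₁ be the Hermitian projection onto g_{z₂,π₂}(z₁)(Im π₁) and ρ₂ the Hermitian projection onto g_{z₁,π₁}(z₂)(Im π₂). Then g_{z₂,ρ₂}(λ) g_{z₁,π₁}(λ) = g_{z₁,ρ₁}(λ) g_{z₂,π₂}(λ) for all λ. -/
open Matrix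

namespace Stmt7Aux

variable {n : ℕ}

lemma matEqOfMulVec (A B : Matrix (Fin n) (Fin n) ℂ) (h : ∀ v, A.mulVec v = B.mulVec v) :
    A = B := by
  ext i j
  have := congrFun (h (Pi.single j 1)) i
  simpa [Matrix.mulVec_single] using this

lemma fixOfRangeLE (ρ M : Matrix (Fin n) (Fin n) ℂ) (hρ : ρ * ρ = ρ)
    (h : LinearMap.range M.mulVecLin ≤ LinearMap.range ρ.mulVecLin) : ρ * M = M := by
  apply matEqOfMulVec
  intro v
  obtain ⟨u, hu⟩ := h ⟨v, rfl⟩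
  simp only [Matrix.mulVecLin_apply] at hu
  rw [← Matrix.mulVec_mulVec, ← hu, Matrix.mulVec_mulVec, hρ, hu]

lemma factorOfRangeLE (ρ M : Matrix (Fin n) (Fin n) ℂ)
    (h : LinearMap.range ρ.mulVecLin ≤ LinearMap.range M.mulVecLin) : ∃ X, ρ = M * X := by
  have hc : ∀ j : Fin n, ∃ w : Fin n → ℂ, M.mulVec w = fun i => ρ i j := by
    intro j
    obtain ⟨w, hw⟩ := h ⟨Pi.single j 1, rfl⟩
    refine ⟨w, ?_⟩
    simp only [Matrix.mulVecLin_apply] at hw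
    rw [hw]
    funext i
    simp [Matrix.mulVec_single]
  choose w hw using hc
  refine ⟨Matrix.of (fun i j => w j i), ?_⟩
  ext i j
  have := congrFun (hw j) i
  simp only [Matrix.mulVec, dotProduct] at this
  simp [Matrix.mul_apply, ← this]

section Algebra

variable (p q : Matrix (Fin n) (Fin n) ℂ)

lemma projMul (hp : p * p = p) (s t : ℂ) :
    (p + s • (1 - p)) * (p + t • (1 - p)) = p + (s * t) • (1 - p) := by
  simp only [mul_add, add_mul, mul_sub, sub_mul, smul_mul_assoc, mul_smul_comm, one_mul,
    mul_one, smul_sub, smul_smul, hp]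
  module

lemma conjTProj (hph : pᴴ = p) (c : ℂ) :
    (p + c • (1 - p))ᴴ = p + ((starRingEnd ℂ) c) • (1 - p) := by
  rw [Matrix.conjTranspose_add, Matrix.conjTranspose_smul, Matrix.conjTranspose_sub,
    Matrix.conjTranspose_one, hph, starRingEnd_apply]

lemma orth1 (hp : p * p = p) (hq : q * q = q) (k k' k'c : ℂ)
    (hS1 : k'c + k - k * k'c = k' * k'c) :
    (q * (p + k'c • (1 - p))) * ((q + k • (1 - q)) * p) =
      (q * (p + k'c • (1 - p))) * ((p + k' • (1 - p)) * (q * p)) := by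
  have hpp : ∀ X : Matrix (Fin n) (Fin n) ℂ, p * (p * X) = p * X := fun X => by
    rw [← mul_assoc, hp]
  have hqq : ∀ X : Matrix (Fin n) (Fin n) ℂ, q * (q * X) = q * X := fun X => by
    rw [← mul_assoc, hq]
  simp only [mul_add, add_mul, mul_sub, sub_mul, smul_mul_assoc, mul_smul_comm, one_mul,
    mul_one, smul_sub, smul_add, smul_smul, mul_assoc, hp, hq, hpp, hqq]
  match_scalars <;>
    first
      | ring1
      | linear_combination hS1
      | linear_combination -hS1
      | linear_combination (2:ℂ)*hS1
      | linear_combination (-2:ℂ)*hS1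

lemma goal2a (hp : p * p = p) (hq : q * q = q) (k kc k'c : ℂ)
    (hS3c : k * (1 - kc) + (1 - k) * k'c = 0) :
    k • (p * (q + kc • (1 - q))) + (1 - k) • ((p * q) * (p + k'c • (1 - p))) =
      (p * (q + kc • (1 - q))) * ((q + k • (1 - q)) * p) := by
  have hpp : ∀ X : Matrix (Fin n) (Fin n) ℂ, p * (p * X) = p * X := fun X => by
    rw [← mul_assoc, hp]
  have hqq : ∀ X : Matrix (Fin n) (Fin n) ℂ, q * (q * X) = q * X := fun X => by
    rw [← mul_assoc, hq]
  simp only [mul_add, add_mul, mul_sub, sub_mul, smul_mul_assoc, mul_smul_comm, one_mul,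
    mul_one, smul_sub, smul_add, smul_smul, mul_assoc, hp, hq, hpp, hqq]
  match_scalars <;>
    first
      | ring1
      | linear_combination hS3c
      | linear_combination -hS3c
      | linear_combination (2:ℂ)*hS3c
      | linear_combination (-2:ℂ)*hS3c

lemma step1 (r Z : Matrix (Fin n) (Fin n) ℂ) (hp : p * p = p) (hq : q * q = q)
    (k k' k'c : ℂ) (hS1 : k'c + k - k * k'c = k' * k'c)
    (hr1 : r * ((p + k' • (1 - p)) * q) = (p + k' • (1 - p)) * q)
    (hr2 : r = Z * (q * (p + k'c • (1 - p)))) :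
    r * ((q + k • (1 - q)) * p) = (p + k' • (1 - p)) * (q * p) := by
  calc r * ((q + k • (1 - q)) * p)
      = Z * ((q * (p + k'c • (1 - p))) * ((q + k • (1 - q)) * p)) := by
        rw [hr2, mul_assoc]
    _ = Z * ((q * (p + k'c • (1 - p))) * ((p + k' • (1 - p)) * (q * p))) := by
        rw [orth1 p q hp hq k k' k'c hS1]
    _ = r * ((p + k' • (1 - p)) * (q * p)) := by rw [← mul_assoc, ← hr2]
    _ = (r * ((p + k' • (1 - p)) * q)) * p := by
        rw [← mul_assoc (p + k' • (1 - p)) q p, ← mul_assoc]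
    _ = (p + k' • (1 - p)) * (q * p) := by rw [hr1, mul_assoc]

lemma step2 (r₁ r₂ Z : Matrix (Fin n) (Fin n) ℂ) (hp : p * p = p) (hq : q * q = q)
    (k kc k'c : ℂ) (hS3c : k * (1 - kc) + (1 - k) * k'c = 0)
    (h1 : r₁ * ((q + k • (1 - q)) * p) = (q + k • (1 - q)) * p)
    (hz : r₁ = Z * (p * (q + kc • (1 - q))))
    (hs : (p * (q + kc • (1 - q))) * r₂ = (p * q) * (p + k'c • (1 - p))) :
    (q + k • (1 - q)) * p = r₁ * (r₂ + k • (1 - r₂)) := by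
  have expand : (p * (q + kc • (1 - q))) * (r₂ + k • (1 - r₂)) =
      (p * (q + kc • (1 - q))) * ((q + k • (1 - q)) * p) := by
    have h0 : (p * (q + kc • (1 - q))) * (r₂ + k • (1 - r₂)) =
        k • (p * (q + kc • (1 - q))) + (1 - k) • ((p * (q + kc • (1 - q))) * r₂) := by
      simp only [mul_add, mul_smul_comm, mul_sub, mul_one, smul_sub, sub_smul, one_smul]
      module
    rw [h0, hs, goal2a p q hp hq k kc k'c hS3c]
  calc (q + k • (1 - q)) * p = r₁ * ((q + k • (1 - q)) * p) := h1.symm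
    _ = Z * ((p * (q + kc • (1 - q))) * ((q + k • (1 - q)) * p)) := by rw [hz, mul_assoc]
    _ = Z * ((p * (q + kc • (1 - q))) * (r₂ + k • (1 - r₂))) := by rw [expand]
    _ = r₁ * (r₂ + k • (1 - r₂)) := by rw [← mul_assoc, ← hz]

lemma step3 (r₁ r₂ : Matrix (Fin n) (Fin n) ℂ) (hq : q * q = q) (hr₂ : r₂ * r₂ = r₂)
    (kc m : ℂ) (hmk : m * kc = 1)
    (hA : p * (q + kc • (1 - q)) = (r₂ + kc • (1 - r₂)) * r₁) :
    (r₂ + m • (1 - r₂)) * p = r₁ * (q + m • (1 - q)) := by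
  have e1 : (r₂ + m • (1 - r₂)) * (r₂ + kc • (1 - r₂)) = 1 := by
    rw [projMul r₂ hr₂ m kc, hmk]
    simp
  have e2 : (q + kc • (1 - q)) * (q + m • (1 - q)) = 1 := by
    rw [projMul q hq kc m, mul_comm kc m, hmk]
    simp
  calc (r₂ + m • (1 - r₂)) * p
      = (r₂ + m • (1 - r₂)) * p * ((q + kc • (1 - q)) * (q + m • (1 - q))) := by
        rw [e2, mul_one]
    _ = (r₂ + m • (1 - r₂)) * (p * (q + kc • (1 - q))) * (q + m • (1 - q)) := by
        rw [← mul_assoc, mul_assoc (r₂ + m • (1 - r₂)) p (q + kc • (1 - q))]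
    _ = (r₂ + m • (1 - r₂)) * ((r₂ + kc • (1 - r₂)) * r₁) * (q + m • (1 - q)) := by
        rw [hA]
    _ = r₁ * (q + m • (1 - q)) := by rw [← mul_assoc, e1, one_mul]

lemma finalStep (r₁ r₂ : Matrix (Fin n) (Fin n) ℂ) (x y m m' : ℂ)
    (hm : m ≠ 0) (hm' : m' ≠ 0)
    (hFS : y*(1-x)*(1-m)*m' + x*(1-y)*(1-m')*m = (1-x)*(1-y)*(m*m'))
    (hEA : (r₂ + m • (1 - r₂)) * p = r₁ * (q + m • (1 - q)))
    (hEB : (r₁ + m' • (1 - r₁)) * q = r₂ * (p + m' • (1 - p))) :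
    (r₂ + y • (1 - r₂)) * (p + x • (1 - p)) = (r₁ + x • (1 - r₁)) * (q + y • (1 - q)) := by
  have key : (m*m') • ((r₂ + y • (1 - r₂)) * (p + x • (1 - p))
        - (r₁ + x • (1 - r₁)) * (q + y • (1 - q)))
      = (y*(1-x)*m') • ((r₂ + m • (1 - r₂)) * p - r₁ * (q + m • (1 - q)))
        + (-(x*(1-y))*m) • ((r₁ + m' • (1 - r₁)) * q - r₂ * (p + m' • (1 - p))) := by
    simp only [mul_add, add_mul, mul_sub, sub_mul, smul_mul_assoc, mul_smul_comm, one_mul,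
      mul_one, smul_sub, smul_add, smul_smul]
    match_scalars <;>
      first
        | ring1
        | linear_combination hFS
        | linear_combination -hFS
        | linear_combination (2:ℂ)*hFS
        | linear_combination (-2:ℂ)*hFS
  rw [hEA, hEB, sub_self, sub_self, smul_zero, smul_zero, add_zero] at key
  have := (smul_eq_zero.mp key).resolve_left (mul_ne_zero hm hm')
  exact sub_eq_zero.mp this

end Algebra

set_option maxHeartbeats 1000000 in
lemma FSscalar (u a b c d : ℂ) (h1 : u - a ≠ 0) (h2 : u - b ≠ 0)
    (h3 : c - b ≠ 0) (h4 : d - a ≠ 0) :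
    ((u-d)/(u-b))*((c-a)/(u-a))*((d-b)/(c-b))*((d-c)/(d-a))
      + ((u-c)/(u-a))*((d-b)/(u-b))*((c-a)/(d-a))*((c-d)/(c-b))
    = ((c-a)/(u-a))*((d-b)/(u-b))*(((c-d)/(c-b))*((d-c)/(d-a))) := by
  simp only [div_mul_div_comm]
  rw [div_add_div _ _ (by simp [sub_ne_zero] at *; tauto) (by simp [sub_ne_zero] at *; tauto),
    div_eq_div_iff (by simp [sub_ne_zero] at *; tauto) (by simp [sub_ne_zero] at *; tauto)]
  ring

/-- The key lemma: the "evaluated at conj z₁" exchange identity. -/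
lemma keyA' (z₁ z₂ : ℂ) (hz₁ : z₁.im ≠ 0) (hz₂ : z₂.im ≠ 0)
    (h12 : z₁ ≠ z₂) (h12' : z₁ ≠ (starRingEnd ℂ) z₂)
    (P₁ P₂ ρ₁ ρ₂ : Matrix (Fin n) (Fin n) ℂ)
    (hP₁ : P₁ * P₁ = P₁) (hP₁h : P₁ᴴ = P₁)
    (hP₂ : P₂ * P₂ = P₂) (hP₂h : P₂ᴴ = P₂)
    (hρ₁ : ρ₁ * ρ₁ = ρ₁) (hρ₁h : ρ₁ᴴ = ρ₁)
    (hρ₂ : ρ₂ * ρ₂ = ρ₂) (hρ₂h : ρ₂ᴴ = ρ₂)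
    (hρ₁im : LinearMap.range ρ₁.mulVecLin =
      Submodule.map (gSimple z₂ P₂ z₁).mulVecLin (LinearMap.range P₁.mulVecLin))
    (hρ₂im : LinearMap.range ρ₂.mulVecLin =
      Submodule.map (gSimple z₁ P₁ z₂).mulVecLin (LinearMap.range P₂.mulVecLin)) :
    (ρ₂ + (((starRingEnd ℂ) z₁ - (starRingEnd ℂ) z₂)/((starRingEnd ℂ) z₁ - z₂)) • (1 - ρ₂)) * P₁
      = ρ₁ * (P₂ + (((starRingEnd ℂ) z₁ - (starRingEnd ℂ) z₂)/((starRingEnd ℂ) z₁ - z₂)) • (1 - P₂)) := by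
  set w₁ := (starRingEnd ℂ) z₁ with hw₁
  set w₂ := (starRingEnd ℂ) z₂ with hw₂
  -- nonvanishing facts
  have hz12 : z₁ - z₂ ≠ 0 := sub_ne_zero.mpr h12
  have hz21 : z₂ - z₁ ≠ 0 := sub_ne_zero.mpr (Ne.symm h12)
  have hw12 : w₁ - w₂ ≠ 0 := by
    rw [sub_ne_zero]
    intro h
    exact h12 (by simpa [hw₁, hw₂] using congrArg (starRingEnd ℂ) h)
  have hw21 : w₂ - w₁ ≠ 0 := fun h => hw12 (by linear_combination -h)
  have hz1w2 : z₁ - w₂ ≠ 0 := sub_ne_zero.mpr h12'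
  have hw1z2 : w₁ - z₂ ≠ 0 := by
    rw [sub_ne_zero]
    intro h
    exact h12' (by simpa [hw₁, hw₂] using congrArg (starRingEnd ℂ) h)
  -- scalars
  set k := (z₁ - w₂)/(z₁ - z₂) with hk
  set kc := (w₁ - z₂)/(w₁ - w₂) with hkc
  set k' := (z₂ - w₁)/(z₂ - z₁) with hk'
  set k'c := (w₂ - z₁)/(w₂ - w₁) with hk'c
  set m := (w₁ - w₂)/(w₁ - z₂) with hm
  have hkconj : (starRingEnd ℂ) k = kc := by
    rw [hk, hkc, map_div₀, map_sub, map_sub, hw₁, hw₂, Complex.conj_conj]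
  have hk'conj : (starRingEnd ℂ) k' = k'c := by
    rw [hk', hk'c, map_div₀, map_sub, map_sub, hw₁, hw₂, Complex.conj_conj]
  have hS1 : k'c + k - k * k'c = k' * k'c := by
    rw [hk, hk', hk'c]
    field_simp
    ring
  have hS3c : k * (1 - kc) + (1 - k) * k'c = 0 := by
    rw [hk, hkc, hk'c]
    field_simp
    ring
  have hmk : m * kc = 1 := by
    rw [hm, hkc]
    field_simp
  -- the two simple factors evaluated at the opposite point
  have hG : gSimple z₂ P₂ z₁ = P₂ + k • (1 - P₂) := rfl
  have hG' : gSimple z₁ P₁ z₂ = P₁ + k' • (1 - P₁) := rfl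
  -- range facts
  have hr₁ : LinearMap.range ((P₂ + k • (1 - P₂)) * P₁).mulVecLin
      = LinearMap.range ρ₁.mulVecLin := by
    rw [Matrix.mulVecLin_mul, LinearMap.range_comp, ← hG, hρ₁im]
  have hr₂ : LinearMap.range ((P₁ + k' • (1 - P₁)) * P₂).mulVecLin
      = LinearMap.range ρ₂.mulVecLin := by
    rw [Matrix.mulVecLin_mul, LinearMap.range_comp, ← hG', hρ₂im]
  have F1a : ρ₁ * ((P₂ + k • (1 - P₂)) * P₁) = (P₂ + k • (1 - P₂)) * P₁ :=
    fixOfRangeLE ρ₁ _ hρ₁ (le_of_eq hr₁)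
  have F2a : ρ₂ * ((P₁ + k' • (1 - P₁)) * P₂) = (P₁ + k' • (1 - P₁)) * P₂ :=
    fixOfRangeLE ρ₂ _ hρ₂ (le_of_eq hr₂)
  obtain ⟨X, hX⟩ := factorOfRangeLE ρ₁ _ (le_of_eq hr₁.symm)
  obtain ⟨Y, hY⟩ := factorOfRangeLE ρ₂ _ (le_of_eq hr₂.symm)
  have hρ₁alt : ρ₁ = Xᴴ * (P₁ * (P₂ + kc • (1 - P₂))) := by
    conv_lhs => rw [← hρ₁h, hX]
    simp only [Matrix.conjTranspose_mul, conjTProj P₂ hP₂h k, hkconj, hP₁h, mul_assoc]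
  have hρ₂alt : ρ₂ = Yᴴ * (P₂ * (P₁ + k'c • (1 - P₁))) := by
    conv_lhs => rw [← hρ₂h, hY]
    simp only [Matrix.conjTranspose_mul, conjTProj P₁ hP₁h k', hk'conj, hP₂h, mul_assoc]
  -- Step 1
  have S1res : ρ₂ * ((P₂ + k • (1 - P₂)) * P₁) = (P₁ + k' • (1 - P₁)) * (P₂ * P₁) :=
    step1 P₁ P₂ ρ₂ Yᴴ hP₁ hP₂ k k' k'c hS1 F2a hρ₂alt
  -- its conjugate transpose
  have S1res' : (P₁ * (P₂ + kc • (1 - P₂))) * ρ₂ = (P₁ * P₂) * (P₁ + k'c • (1 - P₁)) := by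
    have := congrArg Matrix.conjTranspose S1res
    simp only [Matrix.conjTranspose_mul, conjTProj P₂ hP₂h k, conjTProj P₁ hP₁h k',
      hkconj, hk'conj, hρ₂h, hP₁h, hP₂h] at this
    exact this
  -- Step 2 : A''
  have A'' : (P₂ + k • (1 - P₂)) * P₁ = ρ₁ * (ρ₂ + k • (1 - ρ₂)) :=
    step2 P₁ P₂ ρ₁ ρ₂ Xᴴ hP₁ hP₂ k kc k'c hS3c F1a hρ₁alt S1res'
  -- conjugate transpose of A''
  have A''c : P₁ * (P₂ + kc • (1 - P₂)) = (ρ₂ + kc • (1 - ρ₂)) * ρ₁ := by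
    have := congrArg Matrix.conjTranspose A''
    simp only [Matrix.conjTranspose_mul, conjTProj P₂ hP₂h k,
      conjTProj ρ₂ hρ₂h k, hkconj, hρ₁h, hρ₂h, hP₁h] at this
    exact this
  -- Step 3
  exact step3 P₁ P₂ ρ₁ ρ₂ hP₂ hρ₂ kc m hmk A''c

end Stmt7Aux

theorem stmt_7 {n : ℕ} (z₁ z₂ : ℂ) (hz₁ : z₁.im ≠ 0) (hz₂ : z₂.im ≠ 0)
    (h12 : z₁ ≠ z₂) (h12' : z₁ ≠ (starRingEnd ℂ) z₂)
    (P₁ P₂ ρ₁ ρ₂ : Matrix (Fin n) (Fin n) ℂ)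
    (hP₁ : P₁ * P₁ = P₁) (hP₁h : P₁ᴴ = P₁)
    (hP₂ : P₂ * P₂ = P₂) (hP₂h : P₂ᴴ = P₂)
    (hρ₁ : ρ₁ * ρ₁ = ρ₁) (hρ₁h : ρ₁ᴴ = ρ₁)
    (hρ₂ : ρ₂ * ρ₂ = ρ₂) (hρ₂h : ρ₂ᴴ = ρ₂)
    -- ρ₁ is the Hermitian projection onto g_{z₂,π₂}(z₁)(Im π₁)
    (hρ₁im : LinearMap.range ρ₁.mulVecLin =
      Submodule.map (gSimple z₂ P₂ z₁).mulVecLin (LinearMap.range P₁.mulVecLin))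
    -- ρ₂ is the Hermitian projection onto g_{z₁,π₁}(z₂)(Im π₂)
    (hρ₂im : LinearMap.range ρ₂.mulVecLin =
      Submodule.map (gSimple z₁ P₁ z₂).mulVecLin (LinearMap.range P₂.mulVecLin)) :
    ∀ lam : ℂ, lam ≠ z₁ → lam ≠ z₂ → gSimple z₂ ρ₂ lam * gSimple z₁ P₁ lam =
      gSimple z₁ ρ₁ lam * gSimple z₂ P₂ lam := by
  intro lam hl1 hl2
  have h21 : z₂ ≠ z₁ := Ne.symm h12
  have h21' : z₂ ≠ (starRingEnd ℂ) z₁ := by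
    intro h
    exact h12' (by simpa using (congrArg (starRingEnd ℂ) h).symm)
  have hEA := Stmt7Aux.keyA' z₁ z₂ hz₁ hz₂ h12 h12' P₁ P₂ ρ₁ ρ₂ hP₁ hP₁h hP₂ hP₂h
    hρ₁ hρ₁h hρ₂ hρ₂h hρ₁im hρ₂im
  have hEB := Stmt7Aux.keyA' z₂ z₁ hz₂ hz₁ h21 h21' P₂ P₁ ρ₂ ρ₁ hP₂ hP₂h hP₁ hP₁h
    hρ₂ hρ₂h hρ₁ hρ₁h hρ₂im hρ₁im
  set w₁ := (starRingEnd ℂ) z₁ with hw₁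
  set w₂ := (starRingEnd ℂ) z₂ with hw₂
  set m := (w₁ - w₂)/(w₁ - z₂) with hm
  set m' := (w₂ - w₁)/(w₂ - z₁) with hm'
  set x := (lam - w₁)/(lam - z₁) with hx
  set y := (lam - w₂)/(lam - z₂) with hy
  -- nonvanishing
  have hz12 : z₁ - z₂ ≠ 0 := sub_ne_zero.mpr h12
  have hw12 : w₁ - w₂ ≠ 0 := by
    rw [sub_ne_zero]
    intro h
    exact h12 (by simpa [hw₁, hw₂] using congrArg (starRingEnd ℂ) h)
  have hw21 : w₂ - w₁ ≠ 0 := fun h => hw12 (by linear_combination -h)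
  have hw1z2 : w₁ - z₂ ≠ 0 := by
    rw [sub_ne_zero]
    intro h
    exact h12' (by simpa [hw₁, hw₂] using congrArg (starRingEnd ℂ) h)
  have hw2z1 : w₂ - z₁ ≠ 0 := by
    rw [sub_ne_zero]
    intro h
    exact h12' (by rw [← h, hw₂])
  have hlz1 : lam - z₁ ≠ 0 := sub_ne_zero.mpr hl1
  have hlz2 : lam - z₂ ≠ 0 := sub_ne_zero.mpr hl2
  have hmne : m ≠ 0 := by
    rw [hm]
    exact div_ne_zero hw12 hw1z2
  have hm'ne : m' ≠ 0 := by
    rw [hm']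
    exact div_ne_zero hw21 hw2z1
  have hFS : y*(1-x)*(1-m)*m' + x*(1-y)*(1-m')*m = (1-x)*(1-y)*(m*m') := by
    have e1x : 1 - x = (w₁ - z₁)/(lam - z₁) := by
      rw [hx, eq_div_iff hlz1, sub_mul, one_mul, div_mul_cancel₀ _ hlz1]; ring
    have e1y : 1 - y = (w₂ - z₂)/(lam - z₂) := by
      rw [hy, eq_div_iff hlz2, sub_mul, one_mul, div_mul_cancel₀ _ hlz2]; ring
    have e1m : 1 - m = (w₂ - z₂)/(w₁ - z₂) := by
      rw [hm, eq_div_iff hw1z2, sub_mul, one_mul, div_mul_cancel₀ _ hw1z2]; ring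
    have e1m' : 1 - m' = (w₁ - z₁)/(w₂ - z₁) := by
      rw [hm', eq_div_iff hw2z1, sub_mul, one_mul, div_mul_cancel₀ _ hw2z1]; ring
    rw [e1x, e1y, e1m, e1m', hx, hy, hm, hm']
    exact Stmt7Aux.FSscalar lam z₁ z₂ w₁ w₂ hlz1 hlz2 hw1z2 hw2z1
  have hgoal : (ρ₂ + y • (1 - ρ₂)) * (P₁ + x • (1 - P₁))
      = (ρ₁ + x • (1 - ρ₁)) * (P₂ + y • (1 - P₂)) :=
    Stmt7Aux.finalStep P₁ P₂ ρ₁ ρ₂ x y m m' hmne hm'ne hFS hEA hEB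
  exact hgoal
end

section
/- Let β: ℝⁿ → Mₙ(ℝ) be symmetric with zero diagonal. Then the connection one-form [δ,β] (with δ = diag(du₁,…,duₙ)) is flat, i.e. d[δ,β] + [δ,β]∧[δ,β] = 0, if and only if β satisfies the Darboux–Egoroff equations: (β_{ij})_{u_k} = β_{ik}β_{kj} for distinct i,j,k, and (β_{ij})_{u_i} + (β_{ij})_{u_j} + Σ_k β_{ik}β_{jk} = 0 for i ≠ j. -/
open Matrix

section Aux
variable {n : ℕ} (β : (Fin n → ℝ) → Matrix (Fin n) (Fin n) ℝ)

theorem aux_aent (u : Fin n → ℝ) (l i j : Fin n) :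
    ((Matrix.single l l (1:ℝ) * β u - β u * Matrix.single l l 1) : Matrix (Fin n) (Fin n) ℝ) i j
      = (if i = l then β u l j else 0) - (if j = l then β u i l else 0) := by
  simp [Matrix.sub_apply, Matrix.mul_apply, Matrix.single, ite_and, eq_comm]

theorem aux_afd (hβsmooth : ∀ i j, ContDiff ℝ (⊤ : ℕ∞) (fun u => β u i j))
    (u v : Fin n → ℝ) (l i j : Fin n) :
    fderiv ℝ (fun u => ((Matrix.single l l (1:ℝ) * β u - β u * Matrix.single l l 1) : Matrix (Fin n) (Fin n) ℝ) i j) u v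
      = (if i = l then fderiv ℝ (fun u => β u l j) u v else 0)
        - (if j = l then fderiv ℝ (fun u => β u i l) u v else 0) := by
  have hd : ∀ a b : Fin n, DifferentiableAt ℝ (fun u => β u a b) u :=
    fun a b => ((hβsmooth a b).differentiable (by simp)).differentiableAt
  have he : (fun u => ((Matrix.single l l (1:ℝ) * β u - β u * Matrix.single l l 1) : Matrix (Fin n) (Fin n) ℝ) i j)
      = fun u => (if i = l then β u l j else 0) - (if j = l then β u i l else 0) :=
    funext fun u => aux_aent β u l i j
  rw [he]
  by_cases h1 : i = l <;> by_cases h2 : j = l <;>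
    simp [h1, h2, fderiv_sub, hd]

theorem aux_amul (hβdiag : ∀ u i, β u i i = 0) (u : Fin n → ℝ) (k l i j : Fin n) (hkl : k ≠ l) :
    (((Matrix.single k k (1:ℝ) * β u - β u * Matrix.single k k 1) *
      (Matrix.single l l (1:ℝ) * β u - β u * Matrix.single l l 1)) : Matrix (Fin n) (Fin n) ℝ) i j
    = (if i = k then β u k l * β u l j else 0)
      - (if i = k ∧ j = l then ∑ m, β u k m * β u m l else 0)
      + (if j = l then β u i k * β u k l else 0) := by
  rw [Matrix.mul_apply]
  simp only [aux_aent]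
  by_cases hik : i = k <;> by_cases hjl : j = l <;>
    simp [hik, hjl, sub_mul, mul_sub, Finset.sum_sub_distrib, ite_mul, mul_ite,
      Finset.sum_ite_eq', hβdiag, hkl, Ne.symm hkl]

end Aux

theorem stmt_12 {n : ℕ} (β : (Fin n → ℝ) → Matrix (Fin n) (Fin n) ℝ)
    (hβsmooth : ∀ i j, ContDiff ℝ (⊤ : ℕ∞) (fun u => β u i j))
    (hβsym : ∀ u, (β u)ᵀ = β u) (hβdiag : ∀ u i, β u i i = 0) :
    -- flatness of [δ,β]: with A_k = [E_kk, β], d[δ,β] + [δ,β]∧[δ,β] = 0 reads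
    -- ∂_k A_l - ∂_l A_k + A_k A_l - A_l A_k = 0 for all k, l
    ((∀ (u : Fin n → ℝ) (k l i j : Fin n),
        fderiv ℝ (fun u =>
            (Matrix.single l l (1 : ℝ) * β u - β u * Matrix.single l l (1 : ℝ)) i j)
          u (Pi.single k 1) -
        fderiv ℝ (fun u =>
            (Matrix.single k k (1 : ℝ) * β u - β u * Matrix.single k k (1 : ℝ)) i j)
          u (Pi.single l 1) +
        ((Matrix.single k k (1 : ℝ) * β u - β u * Matrix.single k k (1 : ℝ)) *
            (Matrix.single l l (1 : ℝ) * β u - β u * Matrix.single l l (1 : ℝ)) -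
          (Matrix.single l l (1 : ℝ) * β u - β u * Matrix.single l l (1 : ℝ)) *
            (Matrix.single k k (1 : ℝ) * β u - β u * Matrix.single k k (1 : ℝ))) i j
          = 0)
      ↔
    -- the Darboux–Egoroff equations
    ((∀ (u : Fin n → ℝ) (i j k : Fin n), i ≠ j → j ≠ k → i ≠ k →
        fderiv ℝ (fun u => β u i j) u (Pi.single k 1) = β u i k * β u k j) ∧
      (∀ (u : Fin n → ℝ) (i j : Fin n), i ≠ j →
        fderiv ℝ (fun u => β u i j) u (Pi.single i 1) +
          fderiv ℝ (fun u => β u i j) u (Pi.single j 1) +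
          ∑ k, β u i k * β u j k = 0))) := by
  have hsym' : ∀ (u : Fin n → ℝ) (a b : Fin n), β u a b = β u b a := fun u a b =>
    (Matrix.transpose_apply (β u) b a).symm.trans (congrFun (congrFun (hβsym u) b) a)
  have hsum : ∀ (u : Fin n → ℝ) (a b : Fin n),
      (∑ m, β u a m * β u m b) = ∑ m, β u a m * β u b m := fun u a b =>
    Finset.sum_congr rfl fun m _ => by rw [hsym' u m b]
  constructor
  · intro H
    refine ⟨?_, ?_⟩
    · intro u i j k hij hjk hik
      have h := H u k i i j
      rw [aux_afd β hβsmooth, aux_afd β hβsmooth, Matrix.sub_apply,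
        aux_amul β hβdiag u k i i j (Ne.symm hik), aux_amul β hβdiag u i k i j hik] at h
      simp [hik, Ne.symm hij, hjk] at h
      linarith
    · intro u i j hij
      have h := H u i j i j
      rw [aux_afd β hβsmooth, aux_afd β hβsmooth, Matrix.sub_apply,
        aux_amul β hβdiag u i j i j hij, aux_amul β hβdiag u j i i j (Ne.symm hij)] at h
      simp [hij, Ne.symm hij, hβdiag] at h
      rw [hsum u i j] at h
      linarith
  · rintro ⟨h1, h2⟩ u k l i j
    by_cases hkl : k = l
    · subst hkl; simp
    · rw [aux_afd β hβsmooth, aux_afd β hβsmooth, Matrix.sub_apply,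
        aux_amul β hβdiag u k l i j hkl, aux_amul β hβdiag u l k i j (Ne.symm hkl)]
      by_cases hik : i = k <;> by_cases hil : i = l <;>
        by_cases hjk : j = k <;> by_cases hjl : j = l
      all_goals try exact absurd (hik.symm.trans hil) hkl
      all_goals try exact absurd (hjk.symm.trans hjl) hkl
      all_goals simp [hik, hil, hjk, hjl, hkl, Ne.symm hkl, hβdiag]
      · rw [hsum u k l]; linarith [h2 u k l hkl]
      · linarith [h1 u k j l (Ne.symm hjk) hjl hkl]
      · rw [hsum u l k]; linarith [h2 u l k (Ne.symm hkl)]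
      · linarith [h1 u l j k (Ne.symm hjl) hjk (Ne.symm hkl)]
      · linarith [h1 u i k l hik hkl hil]
      · linarith [h1 u i l k hil (Ne.symm hkl) hik]
end

section
/- Let β be symmetric with zero diagonal. Then β satisfies the Darboux–Egoroff equations if and only if ω_λ = iλδ + [δ,β] is flat for every λ ∈ ℂ (i.e. dω_λ + ω_λ∧ω_λ = 0 for all λ). -/
open Matrix

-- entry lemmas over a general ring
lemma std_mul_entry {n : ℕ} {R : Type*} [CommRing R] (M : Matrix (Fin n) (Fin n) R) (l i j : Fin n) :
    (Matrix.single l l (1:R) * M) i j = if l = i then M l j else 0 := by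
  simp [Matrix.mul_apply, Matrix.single, Matrix.of_apply, ite_and]

lemma mul_std_entry {n : ℕ} {R : Type*} [CommRing R] (M : Matrix (Fin n) (Fin n) R) (l i j : Fin n) :
    (M * Matrix.single l l (1:R)) i j = if l = j then M i l else 0 := by
  simp [Matrix.mul_apply, Matrix.single, Matrix.of_apply, ite_and]

-- C over ℝ
def Cr {n : ℕ} (b : Matrix (Fin n) (Fin n) ℝ) (k : Fin n) : Matrix (Fin n) (Fin n) ℝ :=
  Matrix.single k k 1 * b - b * Matrix.single k k 1

lemma Cr_entry {n : ℕ} (b : Matrix (Fin n) (Fin n) ℝ) (k a c : Fin n) :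
    Cr b k a c = (if k = a then b k c else 0) - (if k = c then b a k else 0) := by
  simp [Cr, std_mul_entry, mul_std_entry]

lemma prodEntry {n : ℕ} (b : Matrix (Fin n) (Fin n) ℝ) (k l i j : Fin n) :
    (Cr b k * Cr b l) i j =
      (if k = i then b k l * b l j else 0)
      - (if k = i then (if l = j then ∑ m, b k m * b m j else 0) else 0)
      - (if k = l then b i k * b l j else 0)
      + (if l = j then b i k * b k j else 0) := by
  simp only [Matrix.mul_apply, Cr_entry, sub_mul, mul_sub]
  rw [Finset.sum_sub_distrib, Finset.sum_sub_distrib, Finset.sum_sub_distrib]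
  by_cases hki : k = i <;> by_cases hlj : l = j <;> by_cases hkl : k = l <;>
    simp [hki, hlj, hkl, Finset.sum_ite_eq, Finset.sum_ite_eq', mul_comm, eq_comm] <;> ring

lemma map_std {n : ℕ} (k : Fin n) :
    (Matrix.single k k (1:ℝ)).map (fun x : ℝ => (x:ℂ)) = Matrix.single k k (1:ℂ) := by
  ext i j
  simp [Matrix.map_apply, Matrix.single, Matrix.of_apply, apply_ite]

lemma map_comm {n : ℕ} (b : Matrix (Fin n) (Fin n) ℝ) (k : Fin n) :
    Matrix.single k k (1:ℂ) * b.map (fun x : ℝ => (x:ℂ)) -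
      b.map (fun x : ℝ => (x:ℂ)) * Matrix.single k k (1:ℂ) =
    (Matrix.single k k (1:ℝ) * b - b * Matrix.single k k 1).map (fun x : ℝ => (x:ℂ)) := by
  have : (fun x : ℝ => (x:ℂ)) = ⇑Complex.ofRealHom := rfl
  rw [this, Matrix.map_sub _ (fun a b => map_sub Complex.ofRealHom a b), Matrix.map_mul, Matrix.map_mul, ← this, map_std]

-- fderiv of (fun u => ((β u a b : ℝ) : ℂ))
lemma fderiv_ofReal {n : ℕ} (f : (Fin n → ℝ) → ℝ) (hf : Differentiable ℝ f) (u v : Fin n → ℝ) :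
    fderiv ℝ (fun u => ((f u : ℝ) : ℂ)) u v = ((fderiv ℝ f u v : ℝ) : ℂ) := by
  have h := (Complex.ofRealCLM.hasFDerivAt.comp u (hf u).hasFDerivAt).fderiv
  rw [show (fun u => ((f u : ℝ) : ℂ)) = (⇑Complex.ofRealCLM ∘ f) from rfl, h]
  simp

lemma fderivA {n : ℕ} (β : (Fin n → ℝ) → Matrix (Fin n) (Fin n) ℝ)
    (hd : ∀ i j, Differentiable ℝ (fun u => β u i j)) (lam : ℂ) (l i j : Fin n) (u v : Fin n → ℝ) :
    fderiv ℝ (fun u =>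
        ((Complex.I * lam) • Matrix.single l l (1 : ℂ) +
          (Matrix.single l l (1 : ℂ) * (β u).map (fun x : ℝ => (x : ℂ)) -
            (β u).map (fun x : ℝ => (x : ℂ)) * Matrix.single l l (1 : ℂ))) i j) u v
    = (((if l = i then fderiv ℝ (fun u => β u l j) u v else 0)
        - (if l = j then fderiv ℝ (fun u => β u i l) u v else 0) : ℝ) : ℂ) := by
  have hfun : (fun u =>
        ((Complex.I * lam) • Matrix.single l l (1 : ℂ) +
          (Matrix.single l l (1 : ℂ) * (β u).map (fun x : ℝ => (x : ℂ)) -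
            (β u).map (fun x : ℝ => (x : ℂ)) * Matrix.single l l (1 : ℂ))) i j)
      = fun u => (Complex.I * lam) * (Matrix.single l l (1:ℂ) i j) +
          ((if l = i then ((β u l j : ℝ) : ℂ) else 0) - (if l = j then ((β u i l : ℝ) : ℂ) else 0)) := by
    funext u
    simp [Matrix.add_apply, Matrix.sub_apply, Matrix.smul_apply, Matrix.mul_apply,
      Matrix.single, Matrix.of_apply, Matrix.map_apply, ite_and, smul_eq_mul]
  rw [hfun]
  have hdc : ∀ a c : Fin n, Differentiable ℝ (fun u => ((β u a c : ℝ) : ℂ)) :=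
    fun a c => Complex.ofRealCLM.differentiable.comp (hd a c)
  have hg : ∀ (c : Prop) [Decidable c] (a b' : Fin n),
      Differentiable ℝ (fun u => if c then ((β u a b' : ℝ) : ℂ) else 0) := by
    intro c _ a b'
    split_ifs
    · exact hdc a b'
    · exact differentiable_const 0
  have key : ∀ (c : Prop) [Decidable c] (a b' : Fin n),
      fderiv ℝ (fun u => if c then ((β u a b' : ℝ) : ℂ) else 0) u v =
        if c then ((fderiv ℝ (fun u => β u a b') u v : ℝ) : ℂ) else 0 := by
    intro c _ a b'
    split_ifs
    · exact fderiv_ofReal _ (hd a b') u v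
    · simp
  rw [fderiv_const_add, fderiv_fun_sub ((hg _ _ _).differentiableAt) ((hg _ _ _).differentiableAt)]
  simp only [ContinuousLinearMap.sub_apply, key]
  push_cast [apply_ite (fun x : ℝ => (x : ℂ))]
  ring

-- A_k A_l - A_l A_k = C_k C_l - C_l C_k
lemma commAA {n : ℕ} (X : Matrix (Fin n) (Fin n) ℂ) (a : ℂ) (k l : Fin n) :
    (a • Matrix.single k k (1:ℂ) + (Matrix.single k k 1 * X - X * Matrix.single k k 1)) *
      (a • Matrix.single l l (1:ℂ) + (Matrix.single l l 1 * X - X * Matrix.single l l 1)) -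
    (a • Matrix.single l l (1:ℂ) + (Matrix.single l l 1 * X - X * Matrix.single l l 1)) *
      (a • Matrix.single k k (1:ℂ) + (Matrix.single k k 1 * X - X * Matrix.single k k 1)) =
    (Matrix.single k k 1 * X - X * Matrix.single k k 1) *
      (Matrix.single l l 1 * X - X * Matrix.single l l 1) -
    (Matrix.single l l 1 * X - X * Matrix.single l l 1) *
      (Matrix.single k k 1 * X - X * Matrix.single k k 1) := by
  have h : Matrix.single k k (1:ℂ) * Matrix.single l l 1 =
      Matrix.single l l (1:ℂ) * Matrix.single k k 1 := by
    by_cases hkl : k = l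
    · subst hkl; rfl
    · rw [Matrix.single_mul_single_of_ne (h := hkl), Matrix.single_mul_single_of_ne (h := Ne.symm hkl)]
  set Ek := Matrix.single k k (1:ℂ)
  set El := Matrix.single l l (1:ℂ)
  simp only [add_mul, mul_add, sub_mul, mul_sub, smul_mul_assoc, mul_smul_comm, smul_smul, smul_sub, smul_add]
  rw [h]
  abel_nf
  rw [mul_assoc, mul_assoc, mul_assoc, mul_assoc, mul_assoc, mul_assoc, mul_assoc, mul_assoc]
  rw [h, ← mul_assoc El Ek X, ← h, mul_assoc]
  abel
lemma master {n : ℕ} (β : (Fin n → ℝ) → Matrix (Fin n) (Fin n) ℝ)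
    (hd : ∀ i j, Differentiable ℝ (fun u => β u i j)) (lam : ℂ) (u : Fin n → ℝ) (k l i j : Fin n) :
    (fderiv ℝ (fun u =>
            ((Complex.I * lam) • Matrix.single l l (1 : ℂ) +
              (Matrix.single l l (1 : ℂ) * (β u).map (fun x : ℝ => (x : ℂ)) -
                (β u).map (fun x : ℝ => (x : ℂ)) * Matrix.single l l (1 : ℂ))) i j)
          u (Pi.single k 1) -
        fderiv ℝ (fun u =>
            ((Complex.I * lam) • Matrix.single k k (1 : ℂ) +
              (Matrix.single k k (1 : ℂ) * (β u).map (fun x : ℝ => (x : ℂ)) -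
                (β u).map (fun x : ℝ => (x : ℂ)) * Matrix.single k k (1 : ℂ))) i j)
          u (Pi.single l 1) +
        (((Complex.I * lam) • Matrix.single k k (1 : ℂ) +
            (Matrix.single k k (1 : ℂ) * (β u).map (fun x : ℝ => (x : ℂ)) -
              (β u).map (fun x : ℝ => (x : ℂ)) * Matrix.single k k (1 : ℂ))) *
          ((Complex.I * lam) • Matrix.single l l (1 : ℂ) +
            (Matrix.single l l (1 : ℂ) * (β u).map (fun x : ℝ => (x : ℂ)) -
              (β u).map (fun x : ℝ => (x : ℂ)) * Matrix.single l l (1 : ℂ))) -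
          ((Complex.I * lam) • Matrix.single l l (1 : ℂ) +
            (Matrix.single l l (1 : ℂ) * (β u).map (fun x : ℝ => (x : ℂ)) -
              (β u).map (fun x : ℝ => (x : ℂ)) * Matrix.single l l (1 : ℂ))) *
          ((Complex.I * lam) • Matrix.single k k (1 : ℂ) +
            (Matrix.single k k (1 : ℂ) * (β u).map (fun x : ℝ => (x : ℂ)) -
              (β u).map (fun x : ℝ => (x : ℂ)) * Matrix.single k k (1 : ℂ)))) i j)
    = ((((if l = i then fderiv ℝ (fun u => β u l j) u (Pi.single k 1) else 0)
        - (if l = j then fderiv ℝ (fun u => β u i l) u (Pi.single k 1) else 0))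
        - ((if k = i then fderiv ℝ (fun u => β u k j) u (Pi.single l 1) else 0)
        - (if k = j then fderiv ℝ (fun u => β u i k) u (Pi.single l 1) else 0))
        + ((Cr (β u) k * Cr (β u) l) i j - (Cr (β u) l * Cr (β u) k) i j) : ℝ) : ℂ) := by
  rw [fderivA β hd lam l i j u (Pi.single k 1), fderivA β hd lam k i j u (Pi.single l 1),
    commAA ((β u).map (fun x : ℝ => (x:ℂ))) (Complex.I * lam) k l]
  rw [map_comm (β u) k, map_comm (β u) l]
  have : (fun x : ℝ => (x:ℂ)) = ⇑Complex.ofRealHom := rfl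
  rw [this, ← Matrix.map_mul, ← Matrix.map_mul,
    ← Matrix.map_sub _ (fun a b => map_sub Complex.ofRealHom a b)]
  rw [Matrix.map_apply,
    show (Matrix.single k k 1 * β u - β u * Matrix.single k k 1) = Cr (β u) k from rfl,
    show (Matrix.single l l 1 * β u - β u * Matrix.single l l 1) = Cr (β u) l from rfl,
    Matrix.sub_apply]
  simp only [Complex.ofRealHom_eq_coe]
  push_cast
  ring

theorem stmt_13 {n : ℕ} (β : (Fin n → ℝ) → Matrix (Fin n) (Fin n) ℝ)
    (hβsmooth : ∀ i j, ContDiff ℝ (⊤ : ℕ∞) (fun u => β u i j))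
    (hβsym : ∀ u, (β u)ᵀ = β u) (hβdiag : ∀ u i, β u i i = 0) :
    -- flatness of ω_λ = iλδ + [δ,β] for every λ ∈ ℂ: with
    -- A_k(λ) = iλ E_kk + [E_kk, β], it reads ∂_k A_l - ∂_l A_k + A_k A_l - A_l A_k = 0
    ((∀ (lam : ℂ) (u : Fin n → ℝ) (k l i j : Fin n),
        fderiv ℝ (fun u =>
            ((Complex.I * lam) • Matrix.single l l (1 : ℂ) +
              (Matrix.single l l (1 : ℂ) * (β u).map (fun x : ℝ => (x : ℂ)) -
                (β u).map (fun x : ℝ => (x : ℂ)) * Matrix.single l l (1 : ℂ))) i j)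
          u (Pi.single k 1) -
        fderiv ℝ (fun u =>
            ((Complex.I * lam) • Matrix.single k k (1 : ℂ) +
              (Matrix.single k k (1 : ℂ) * (β u).map (fun x : ℝ => (x : ℂ)) -
                (β u).map (fun x : ℝ => (x : ℂ)) * Matrix.single k k (1 : ℂ))) i j)
          u (Pi.single l 1) +
        (((Complex.I * lam) • Matrix.single k k (1 : ℂ) +
            (Matrix.single k k (1 : ℂ) * (β u).map (fun x : ℝ => (x : ℂ)) -
              (β u).map (fun x : ℝ => (x : ℂ)) * Matrix.single k k (1 : ℂ))) *
          ((Complex.I * lam) • Matrix.single l l (1 : ℂ) +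
            (Matrix.single l l (1 : ℂ) * (β u).map (fun x : ℝ => (x : ℂ)) -
              (β u).map (fun x : ℝ => (x : ℂ)) * Matrix.single l l (1 : ℂ))) -
          ((Complex.I * lam) • Matrix.single l l (1 : ℂ) +
            (Matrix.single l l (1 : ℂ) * (β u).map (fun x : ℝ => (x : ℂ)) -
              (β u).map (fun x : ℝ => (x : ℂ)) * Matrix.single l l (1 : ℂ))) *
          ((Complex.I * lam) • Matrix.single k k (1 : ℂ) +
            (Matrix.single k k (1 : ℂ) * (β u).map (fun x : ℝ => (x : ℂ)) -
              (β u).map (fun x : ℝ => (x : ℂ)) * Matrix.single k k (1 : ℂ)))) i j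
          = 0)
      ↔
    -- the Darboux–Egoroff equations
    ((∀ (u : Fin n → ℝ) (i j k : Fin n), i ≠ j → j ≠ k → i ≠ k →
        fderiv ℝ (fun u => β u i j) u (Pi.single k 1) = β u i k * β u k j) ∧
      (∀ (u : Fin n → ℝ) (i j : Fin n), i ≠ j →
        fderiv ℝ (fun u => β u i j) u (Pi.single i 1) +
          fderiv ℝ (fun u => β u i j) u (Pi.single j 1) +
          ∑ k, β u i k * β u j k = 0))) := by
  have hd : ∀ i j, Differentiable ℝ (fun u => β u i j) :=
    fun i j => (hβsmooth i j).differentiable (by simp)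
  have hD0 : ∀ (u : Fin n → ℝ) (a c : Fin n), fderiv ℝ (fun u => β u a a) u (Pi.single c 1) = 0 := by
    intro u a c
    have h : (fun u => β u a a) = fun _ : Fin n → ℝ => (0:ℝ) := funext fun u => hβdiag u a
    rw [h, fderiv_fun_const]; simp
  have hsym : ∀ (u : Fin n → ℝ) (a c : Fin n), β u a c = β u c a := by
    intro u a c; conv_lhs => rw [← hβsym u, Matrix.transpose_apply]
  have hDsym : ∀ (u : Fin n → ℝ) (a b c : Fin n),
      fderiv ℝ (fun u => β u a b) u (Pi.single c 1) = fderiv ℝ (fun u => β u b a) u (Pi.single c 1) := by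
    intro u a b c
    have h : (fun u => β u a b) = (fun u => β u b a) := funext fun u => hsym u a b
    rw [h]
  have hS : ∀ (u : Fin n → ℝ) (i j : Fin n),
      ∑ x, β u i x * β u x j = ∑ x, β u i x * β u j x := by
    intro u i j
    refine Finset.sum_congr rfl fun x _ => ?_
    rw [hsym u x j]
  constructor
  · intro h
    refine ⟨?_, ?_⟩
    · intro u i j k hij hjk hik
      have H := h 0 u i k i j
      rw [master β hd, Complex.ofReal_eq_zero, prodEntry, prodEntry] at H
      simp [hij, hjk, hik, Ne.symm hij, Ne.symm hjk, Ne.symm hik, hβdiag, hD0] at H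
      linarith
    · intro u i j hij
      have H := h 0 u i j i j
      rw [master β hd, Complex.ofReal_eq_zero, prodEntry, prodEntry] at H
      simp [hij, Ne.symm hij, hβdiag, hD0] at H
      linarith [hS u i j]
  · rintro ⟨h1, h2⟩ lam u k l i j
    rw [master β hd, Complex.ofReal_eq_zero, prodEntry, prodEntry]
    by_cases hkl : k = l
    · subst hkl
      simp
    · by_cases hki : k = i <;> by_cases hkj : k = j <;> by_cases hli : l = i <;> by_cases hlj : l = j <;>
        by_cases hij : i = j <;>
        simp [hki, hkj, hli, hlj, hij, hkl, hD0, hβdiag]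
      all_goals
        first
          | exact absurd (hki.symm.trans hkj) hij
          | exact absurd (hli.symm.trans hlj) hij
          | (intro hlk'; exact absurd hlk'.symm hkl)
          | (simp [hij, hlj, hkj, hkl, eq_comm]
             first
               | linarith [h1 u i j l hij (fun h => hlj h.symm) (fun h => hli h.symm)]
               | linarith [h1 u i j k hij (fun h => hkj h.symm) (fun h => hki h.symm)]
               | linarith [h2 u i j hij, hS u i j])
end

section
/- Let h: ℝⁿ → ℝⁿ be smooth and β symmetric with flat Levi-Civita connection [δ,β]. The following are equivalent: (1) ∂h_i = 0 for all i, where ∂ = Σⱼ ∂/∂uⱼ; (2) dh + [δ,β]h = 0; (3) (h_i)_{u_j} = β_{ij}h_j for i≠j and (h_i)_{u_i} = -Σ_{j≠i} β_{ij}h_j; (4) ‖h‖² = Σ h_i² is constant. (Assume (h_i)_{u_j} = β_{ij}h_j for i≠j throughout.) -/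
open Matrix

theorem stmt_14 {n : ℕ} (β : (Fin n → ℝ) → Matrix (Fin n) (Fin n) ℝ)
    (hβsmooth : ∀ i j, ContDiff ℝ (⊤ : ℕ∞) (fun u => β u i j))
    (hβsym : ∀ u, (β u)ᵀ = β u) (hβdiag : ∀ u i, β u i i = 0)
    -- β satisfies the Darboux–Egoroff equations (so [δ,β] is flat)
    (hDE1 : ∀ (u : Fin n → ℝ) (i j k : Fin n), i ≠ j → j ≠ k → i ≠ k →
      fderiv ℝ (fun u => β u i j) u (Pi.single k 1) = β u i k * β u k j)
    (hDE2 : ∀ (u : Fin n → ℝ) (i j : Fin n), i ≠ j →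
      fderiv ℝ (fun u => β u i j) u (Pi.single i 1) +
        fderiv ℝ (fun u => β u i j) u (Pi.single j 1) +
        ∑ k, β u i k * β u j k = 0)
    (h : (Fin n → ℝ) → (Fin n → ℝ))
    (hhsmooth : ∀ i, ContDiff ℝ (⊤ : ℕ∞) (fun u => h u i))
    (hhpos : ∀ u i, 0 < h u i)
    -- standing assumption: (h_i)_{u_j} = β_{ij} h_j for i ≠ j
    (hh : ∀ (u : Fin n → ℝ) (i j : Fin n), i ≠ j →
      fderiv ℝ (fun u => h u i) u (Pi.single j 1) = β u i j * h u j) :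
    List.TFAE
      [ -- (1) ∂h_i = 0 where ∂ = Σ_j ∂/∂u_j
        ∀ (u : Fin n → ℝ) (i : Fin n),
          ∑ j, fderiv ℝ (fun u => h u i) u (Pi.single j 1) = 0,
        -- (2) dh + [δ,β] h = 0
        ∀ (u : Fin n → ℝ) (j i : Fin n),
          fderiv ℝ (fun u => h u i) u (Pi.single j 1) +
            ((Matrix.single j j (1 : ℝ) * β u -
                β u * Matrix.single j j (1 : ℝ)).mulVec (h u)) i = 0,
        -- (3) (h_i)_{u_j} = β_{ij} h_j for i ≠ j  and  (h_i)_{u_i} = -Σ_j β_{ij} h_j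
        (∀ (u : Fin n → ℝ) (i j : Fin n), i ≠ j →
            fderiv ℝ (fun u => h u i) u (Pi.single j 1) = β u i j * h u j) ∧
          (∀ (u : Fin n → ℝ) (i : Fin n),
            fderiv ℝ (fun u => h u i) u (Pi.single i 1) = -∑ j, β u i j * h u j),
        -- (4) ‖h‖² = Σ_i h_i² is constant
        ∃ c : ℝ, ∀ u : Fin n → ℝ, ∑ i, (h u i) ^ 2 = c ] := by
  have hdiff : ∀ i, Differentiable ℝ (fun u => h u i) :=
    fun i => (hhsmooth i).differentiable (by simp)
  -- rotation symmetry of β entries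
  have hsym : ∀ u i j, β u i j = β u j i := fun u i j => congrFun (congrFun (hβsym u) j) i
  -- key identity relating (1) and (3)
  have key : ∀ (u : Fin n → ℝ) (i : Fin n),
      (∑ j, fderiv ℝ (fun u => h u i) u (Pi.single j 1))
        = fderiv ℝ (fun u => h u i) u (Pi.single i 1) + ∑ j, β u i j * h u j := by
    intro u i
    rw [← Finset.add_sum_erase _ _ (Finset.mem_univ i),
        ← Finset.add_sum_erase _ (fun j => β u i j * h u j) (Finset.mem_univ i),
        hβdiag u i, zero_mul, zero_add]
    congr 1
    exact Finset.sum_congr rfl fun j hj => hh u i j (Finset.ne_of_mem_erase hj).symm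
  -- mulVec computation for (2)
  have mv : ∀ (u : Fin n → ℝ) (j i : Fin n),
      ((Matrix.single j j (1 : ℝ) * β u -
          β u * Matrix.single j j (1 : ℝ)).mulVec (h u)) i
        = (if i = j then ∑ k, β u j k * h u k else 0) - β u i j * h u j := by
    intro u j i
    simp [Matrix.sub_mulVec, Matrix.mulVec, Matrix.mul_apply, Matrix.single,
      dotProduct, ite_mul, mul_ite, Finset.sum_ite_eq, Finset.sum_ite_eq',
      Finset.mul_sum, ite_and, sub_mul, Finset.sum_sub_distrib]
    split_ifs <;> simp_all
  -- derivative of the sum of squares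
  have sq_deriv : ∀ (u v : Fin n → ℝ),
      fderiv ℝ (fun u => ∑ i, h u i ^ 2) u v
        = ∑ i, 2 * h u i * fderiv ℝ (fun u => h u i) u v := by
    intro u v
    have hsq : HasFDerivAt (fun u => ∑ i, h u i ^ 2)
        (∑ i, (2 * h u i) • fderiv ℝ (fun u => h u i) u) u := by
      apply HasFDerivAt.fun_sum
      intro i _
      have hf := (hdiff i u).hasFDerivAt
      have h2 := hf.fun_mul hf
      have he : (2 * h u i) • fderiv ℝ (fun u => h u i) u
          = h u i • fderiv ℝ (fun u => h u i) u + h u i • fderiv ℝ (fun u => h u i) u := by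
        rw [two_mul, add_smul]
      rw [he]
      simpa [pow_two] using h2
    rw [hsq.fderiv]
    simp [ContinuousLinearMap.sum_apply, mul_assoc]
  -- key identity relating (3) and (4)
  have key2 : ∀ (u : Fin n → ℝ) (j : Fin n),
      fderiv ℝ (fun u => ∑ i, h u i ^ 2) u (Pi.single j 1)
        = 2 * h u j * (fderiv ℝ (fun u => h u j) u (Pi.single j 1)
            + ∑ i, β u j i * h u i) := by
    intro u j
    rw [sq_deriv, ← Finset.add_sum_erase _ _ (Finset.mem_univ j), mul_add,
        ← Finset.add_sum_erase _ (fun i => β u j i * h u i) (Finset.mem_univ j),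
        hβdiag u j, zero_mul, zero_add, Finset.mul_sum]
    congr 1
    refine Finset.sum_congr rfl fun i hi => ?_
    rw [hh u i j (Finset.ne_of_mem_erase hi), hsym u i j]
    ring
  have hgdiff : Differentiable ℝ (fun u => ∑ i, h u i ^ 2) :=
    Differentiable.fun_sum fun i _ => (hdiff i).pow 2
  tfae_have 1 ↔ 3 := by
    constructor
    · intro h1
      refine ⟨hh, fun u i => ?_⟩
      have := h1 u i
      rw [key u i] at this
      linarith
    · rintro ⟨-, h3⟩ u i
      rw [key u i, h3 u i]
      ring
  tfae_have 2 ↔ 3 := by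
    constructor
    · intro h2
      refine ⟨hh, fun u i => ?_⟩
      have := h2 u i i
      rw [mv u i i, if_pos rfl, hβdiag u i, zero_mul, sub_zero] at this
      have hs : ∑ k, β u i k * h u k = ∑ j, β u i j * h u j := rfl
      linarith
    · rintro ⟨-, h3⟩ u j i
      rw [mv u j i]
      by_cases hij : i = j
      · subst hij
        rw [if_pos rfl, h3 u i, hβdiag u i, zero_mul, sub_zero]
        ring
      · rw [if_neg hij, hh u i j hij]
        ring
  tfae_have 3 ↔ 4 := by
    constructor
    · rintro ⟨-, h3⟩
      have hz : ∀ u, fderiv ℝ (fun u => ∑ i, h u i ^ 2) u = 0 := by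
        intro u
        have hz1 : ∀ j, fderiv ℝ (fun u => ∑ i, h u i ^ 2) u (Pi.single j 1) = 0 := by
          intro j
          rw [key2 u j, h3 u j]
          simp [hsym u]
        ext v
        have hv : v = ∑ j, v j • (Pi.single j 1 : Fin n → ℝ) := by
          ext k
          simp [Pi.single_apply, Finset.sum_ite_eq']
        calc fderiv ℝ (fun u => ∑ i, h u i ^ 2) u v
            = fderiv ℝ (fun u => ∑ i, h u i ^ 2) u (∑ j, v j • (Pi.single j 1 : Fin n → ℝ)) := by
              rw [← hv]
          _ = ∑ j, v j • fderiv ℝ (fun u => ∑ i, h u i ^ 2) u (Pi.single j 1) := by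
              rw [map_sum]
              exact Finset.sum_congr rfl fun j _ => (fderiv ℝ _ u).map_smul _ _
          _ = 0 := by simp [hz1]
      exact ⟨∑ i, h 0 i ^ 2, fun u =>
        is_const_of_fderiv_eq_zero hgdiff hz u 0⟩
    · rintro ⟨c, hc⟩
      refine ⟨hh, fun u j => ?_⟩
      have hz : fderiv ℝ (fun u => ∑ i, h u i ^ 2) u (Pi.single j 1) = 0 := by
        have : (fun u : Fin n → ℝ => ∑ i, h u i ^ 2) = fun _ => c := funext hc
        rw [this, fderiv_fun_const]
        simp
      rw [key2 u j] at hz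
      have hpos := hhpos u j
      have h0 : fderiv ℝ (fun u => h u j) u (Pi.single j 1) + ∑ i, β u j i * h u i = 0 := by
        rcases mul_eq_zero.mp hz with h' | h'
        · nlinarith
        · exact h'
      have : ∑ i, β u j i * h u i = ∑ i, β u j i * h u i := rfl
      have hswap : ∑ i, β u j i * h u i = ∑ i, β u j i * h u i := rfl
      have := h0
      -- need: fderiv ... = -∑ i, β u j i * h u i  (indices match: goal uses β u j i? goal: β u i j? )
      linarith [h0]
  tfae_finish
end

section
/- Let F = [[E, X],[0,1]] be the extended frame with F⁻¹dF = [[iλδ + [δ,β], δh],[0,0]], α ∈ ℝ\{0}, b ∈ ℝⁿ, and k(λ) = [[I, ib/(λ-iα)],[0,1]]. Define Y(u,λ) = X(u,λ) + i(b - E(u,λ)E(u,iα)⁻¹b)/(λ - iα). Then Y is holomorphic at λ = iα (the residue vanishes), and F̃ = [[E,Y],[0,1]] satisfies F̃⁻¹dF̃ = [[iλδ + [δ,β], δ(h + E(u,iα)⁻¹b)],[0,0]]. -/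
open Matrix Filter Topology

private lemma aux_det_diff {n : ℕ} {m : Type*} [Fintype m] [DecidableEq m]
    {A : (Fin n → ℝ) → Matrix m m ℂ} {u : Fin n → ℝ}
    (hA : ∀ i k, DifferentiableAt ℝ (fun u => A u i k) u) :
    DifferentiableAt ℝ (fun u => (A u).det) u := by
  simp only [Matrix.det_apply']
  apply DifferentiableAt.fun_sum
  intro σ _
  exact ((HasFDerivAt.finset_prod
    (fun i _ => (hA (σ i) i).hasFDerivAt)).differentiableAt).const_mul _

private lemma aux_w_diff {n : ℕ} {A : (Fin n → ℝ) → Matrix (Fin n) (Fin n) ℂ} {u : Fin n → ℝ}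
    (hA : ∀ i k u, DifferentiableAt ℝ (fun u => A u i k) u)
    (hdet : ∀ u, (A u).det ≠ 0) (bC : Fin n → ℂ) (k : Fin n) :
    DifferentiableAt ℝ (fun u => ((A u)⁻¹ *ᵥ bC) k) u := by
  have hrw : ∀ u, ((A u)⁻¹ *ᵥ bC) k = ∑ l, ((A u).det)⁻¹ * ((A u).adjugate k l * bC l) := by
    intro u
    simp only [Matrix.mulVec, dotProduct, Matrix.inv_def, Ring.inverse_eq_inv',
      Matrix.smul_apply, smul_eq_mul, mul_assoc]
  simp only [hrw]
  apply DifferentiableAt.fun_sum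
  intro l _
  apply DifferentiableAt.mul
  · exact (aux_det_diff (fun i k => hA i k u)).inv (hdet u)
  · apply DifferentiableAt.mul_const
    have : (fun u => (A u).adjugate k l) = fun u => ((A u).updateRow l (Pi.single k 1)).det := by
      funext u; rw [Matrix.adjugate_apply]
    rw [this]
    apply aux_det_diff
    intro i k'
    by_cases hil : i = l <;> simp only [Matrix.updateRow_apply, hil, if_true, if_false]
    · exact differentiableAt_const _
    · exact hA i k' u

private lemma aux_fderiv_sum_mul {n : ℕ} {m : Type*} [Fintype m]
    {f g : m → (Fin n → ℝ) → ℂ} {u : Fin n → ℝ} (z : Fin n → ℝ)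
    (hf : ∀ k, DifferentiableAt ℝ (f k) u) (hg : ∀ k, DifferentiableAt ℝ (g k) u) :
    fderiv ℝ (fun u => ∑ k, f k u * g k u) u z
      = ∑ k, (f k u * fderiv ℝ (g k) u z + g k u * fderiv ℝ (f k) u z) := by
  rw [fderiv_fun_sum (A := fun k u => f k u * g k u) (fun k _ => (hf k).mul (hg k)), ContinuousLinearMap.sum_apply]
  refine Finset.sum_congr rfl fun k _ => ?_
  rw [fderiv_fun_mul (hf k) (hg k)]
  simp [smul_eq_mul]
theorem stmt_19 {n : ℕ} (β : (Fin n → ℝ) → Matrix (Fin n) (Fin n) ℝ)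
    (hβsmooth : ∀ i j, ContDiff ℝ (⊤ : ℕ∞) (fun u => β u i j))
    (hβsym : ∀ u, (β u)ᵀ = β u) (hβdiag : ∀ u i, β u i i = 0)
    (h : (Fin n → ℝ) → (Fin n → ℝ))
    (hhsmooth : ∀ i, ContDiff ℝ (⊤ : ℕ∞) (fun u => h u i))
    (hh : ∀ (u : Fin n → ℝ) (i j : Fin n), i ≠ j →
      fderiv ℝ (fun u => h u i) u (Pi.single j 1) = β u i j * h u j)
    -- E: the extended frame's rotation part, E⁻¹dE = iλδ + [δ,β], E(0,λ) = I
    (E : (Fin n → ℝ) → ℂ → Matrix (Fin n) (Fin n) ℂ)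
    (hEsmooth : ∀ lam i k, ContDiff ℝ (⊤ : ℕ∞) (fun u => E u lam i k))
    (hEcont : ∀ u i k, Continuous (fun lam => E u lam i k))
    (hE0 : ∀ lam, E 0 lam = 1)
    (hELax : ∀ (u : Fin n → ℝ) (lam : ℂ) (j i k : Fin n),
      fderiv ℝ (fun u => E u lam i k) u (Pi.single j 1) =
        (E u lam *
          ((Complex.I * lam) • Matrix.single j j (1 : ℂ) +
            (Matrix.single j j (1 : ℂ) * (β u).map (fun x : ℝ => (x : ℂ)) -
              (β u).map (fun x : ℝ => (x : ℂ)) * Matrix.single j j (1 : ℂ)))) i k)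
    -- X: the translation part, dX = E δh, X(0,λ) = 0
    (X : (Fin n → ℝ) → ℂ → (Fin n → ℂ))
    (hXsmooth : ∀ lam i, ContDiff ℝ (⊤ : ℕ∞) (fun u => X u lam i))
    (hXcont : ∀ u i, Continuous (fun lam => X u lam i))
    (hX0 : ∀ lam, X 0 lam = 0)
    (hXLax : ∀ (u : Fin n → ℝ) (lam : ℂ) (j i : Fin n),
      fderiv ℝ (fun u => X u lam i) u (Pi.single j 1) = E u lam i j * (h u j : ℂ))
    (α : ℝ) (hα : α ≠ 0) (b : Fin n → ℝ)
    (hEinv : ∀ u, IsUnit (E u (Complex.I * α))) :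
    -- w(u) = E(u,iα)⁻¹ b  and  Y(u,λ) = X(u,λ) + i (b - E(u,λ) w(u)) / (λ - iα)
    let w : (Fin n → ℝ) → Fin n → ℂ := fun u =>
      (E u (Complex.I * α))⁻¹.mulVec (fun j => (b j : ℂ))
    let Y : (Fin n → ℝ) → ℂ → Fin n → ℂ := fun u lam i =>
      X u lam i +
        Complex.I / (lam - Complex.I * α) * ((b i : ℂ) - (E u lam).mulVec (w u) i)
    -- (a) Y is holomorphic at λ = iα: the residue there vanishes
    (∀ u : Fin n → ℝ,
        Tendsto (fun lam : ℂ => fun i => (lam - Complex.I * α) * Y u lam i)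
          (𝓝[≠] (Complex.I * α)) (𝓝 (0 : Fin n → ℂ))) ∧
    -- (b) F̃ = [[E,Y],[0,1]] satisfies F̃⁻¹dF̃ = [[iλδ + [δ,β], δ(h + E(u,iα)⁻¹b)],[0,0]]
    (∀ (u : Fin n → ℝ) (lam : ℂ), lam ≠ Complex.I * α → ∀ (j i : Fin n),
        fderiv ℝ (fun u => Y u lam i) u (Pi.single j 1) =
          E u lam i j * ((h u j : ℂ) + w u j)) := by
  intro w Y
  have hbC : ∀ u : Fin n → ℝ, E u (Complex.I * α) *ᵥ w u = fun j => (b j : ℂ) := by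
    intro u
    show E u (Complex.I * α) *ᵥ ((E u (Complex.I * α))⁻¹ *ᵥ _) = _
    rw [Matrix.mulVec_mulVec,
      Matrix.mul_nonsing_inv _ ((Matrix.isUnit_iff_isUnit_det _).mp (hEinv u)),
      Matrix.one_mulVec]
  have hdetu : ∀ u : Fin n → ℝ, IsUnit (E u (Complex.I * α)).det :=
    fun u => (Matrix.isUnit_iff_isUnit_det _).mp (hEinv u)
  have hEdiff : ∀ (μ : ℂ) (i k : Fin n) (u : Fin n → ℝ),
      DifferentiableAt ℝ (fun u => E u μ i k) u :=
    fun μ i k u => ((hEsmooth μ i k).differentiable (by simp)).differentiableAt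
  have hwdiff : ∀ (k : Fin n) (u : Fin n → ℝ), DifferentiableAt ℝ (fun u => w u k) u := by
    intro k u
    exact aux_w_diff (fun i k u => hEdiff (Complex.I * α) i k u)
      (fun u => (hdetu u).ne_zero) _ k
  constructor
  · -- part (a)
    intro u
    rw [tendsto_pi_nhds]
    intro i
    have hc : Continuous (fun lam : ℂ =>
        (lam - Complex.I * α) * X u lam i +
          Complex.I * ((b i : ℂ) - (E u lam).mulVec (w u) i)) := by
      apply Continuous.add
      · exact (continuous_id.sub continuous_const).mul (hXcont u i)
      · apply continuous_const.mul
        apply Continuous.sub continuous_const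
        simp only [Matrix.mulVec, dotProduct]
        exact continuous_finset_sum _ fun k _ => (hEcont u i k).mul continuous_const
    have h0 : (Complex.I * α - Complex.I * α) * X u (Complex.I * α) i +
        Complex.I * ((b i : ℂ) - (E u (Complex.I * α)).mulVec (w u) i) = 0 := by
      have hw : (E u (Complex.I * α)).mulVec (w u) i = (b i : ℂ) := congrFun (hbC u) i
      rw [hw]; ring
    have h1 := hc.tendsto (Complex.I * α)
    rw [h0] at h1
    apply Tendsto.congr' _ (h1.mono_left nhdsWithin_le_nhds)
    filter_upwards [self_mem_nhdsWithin] with lam hlam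
    have hne : lam - Complex.I * α ≠ 0 := sub_ne_zero.mpr hlam
    show _ = (lam - Complex.I * α) * Y u lam i
    have hYdef : Y u lam i = X u lam i +
        Complex.I / (lam - Complex.I * α) * ((b i : ℂ) - (E u lam).mulVec (w u) i) := rfl
    rw [hYdef]
    field_simp
  · -- part (b)
    intro u lam hlam j i
    have hne : lam - Complex.I * α ≠ 0 := sub_ne_zero.mpr hlam
    set P : Matrix (Fin n) (Fin n) ℂ := Matrix.single j j (1 : ℂ) with hP
    set Mμ : ℂ → Matrix (Fin n) (Fin n) ℂ := fun μ =>
      (Complex.I * μ) • P +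
        (P * (β u).map (fun x : ℝ => (x : ℂ)) -
          (β u).map (fun x : ℝ => (x : ℂ)) * P) with hMμ
    have hELax' : ∀ (μ : ℂ) (i' k : Fin n),
        fderiv ℝ (fun u => E u μ i' k) u (Pi.single j 1) = (E u μ * Mμ μ) i' k :=
      fun μ i' k => hELax u μ j i' k
    -- derivative of w
    have hv : ∀ k, fderiv ℝ (fun u => w u k) u (Pi.single j 1)
        = (-(Mμ (Complex.I * α) *ᵥ w u)) k := by
      set v : Fin n → ℂ := fun k => fderiv ℝ (fun u => w u k) u (Pi.single j 1) with hvdef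
      have hkey : ∀ i', ∑ k, E u (Complex.I * α) i' k * v k
          = -∑ k, w u k * (E u (Complex.I * α) * Mμ (Complex.I * α)) i' k := by
        intro i'
        have hconstf : (fun u => ∑ k, E u (Complex.I * α) i' k * w u k)
            = fun _ => (b i' : ℂ) := by
          funext u'
          exact congrFun (hbC u') i'
        have hd := aux_fderiv_sum_mul (f := fun k u => E u (Complex.I * α) i' k)
          (g := fun k u => w u k) (Pi.single j 1)
          (fun k => hEdiff (Complex.I * α) i' k u) (fun k => hwdiff k u)
        rw [hconstf] at hd
        simp only [fderiv_fun_const, Pi.zero_apply, ContinuousLinearMap.zero_apply] at hd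
        simp only [hELax'] at hd
        rw [Finset.sum_add_distrib] at hd
        linear_combination (-1 : ℂ) * hd
      have hAv : E u (Complex.I * α) *ᵥ v
          = -((E u (Complex.I * α) * Mμ (Complex.I * α)) *ᵥ w u) := by
        funext i'
        have := hkey i'
        simpa [Matrix.mulVec, dotProduct, mul_comm] using this
      have hvv : v = (E u (Complex.I * α))⁻¹ *ᵥ (E u (Complex.I * α) *ᵥ v) := by
        rw [Matrix.mulVec_mulVec, Matrix.nonsing_inv_mul _ (hdetu u), Matrix.one_mulVec]
      intro k
      show v k = _
      rw [hvv, hAv, Matrix.mulVec_neg, Matrix.mulVec_mulVec, ← Matrix.mul_assoc,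
        Matrix.nonsing_inv_mul _ (hdetu u), Matrix.one_mul]
    -- derivative of the sum S u = ∑ k, E u lam i k * w u k
    have hS : DifferentiableAt ℝ (fun u => ∑ k, E u lam i k * w u k) u :=
      DifferentiableAt.fun_sum fun k _ => (hEdiff lam i k u).mul (hwdiff k u)
    have hSd : fderiv ℝ (fun u => ∑ k, E u lam i k * w u k) u (Pi.single j 1)
        = Complex.I * (lam - Complex.I * α) * (E u lam i j * w u j) := by
      rw [aux_fderiv_sum_mul (f := fun k u => E u lam i k) (g := fun k u => w u k) _
        (fun k => hEdiff lam i k u) (fun k => hwdiff k u)]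
      simp only [hELax', hv]
      have a1 : ∑ k, E u lam i k * (-(Mμ (Complex.I * α) *ᵥ w u)) k
          = -((E u lam * Mμ (Complex.I * α)) *ᵥ w u) i := by
        rw [← Matrix.mulVec_mulVec]
        simp [Matrix.mulVec, dotProduct, mul_neg, Finset.sum_neg_distrib]
      have a2 : ∑ k, w u k * (E u lam * Mμ lam) i k
          = ((E u lam * Mμ lam) *ᵥ w u) i := by
        simp [Matrix.mulVec, dotProduct, mul_comm]
      rw [Finset.sum_add_distrib, a1, a2]
      have e2 : Mμ lam - Mμ (Complex.I * α) = (Complex.I * (lam - Complex.I * α)) • P := by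
        rw [hMμ]
        have : (Complex.I * lam) • P +
              (P * (β u).map (fun x : ℝ => (x : ℂ)) -
                (β u).map (fun x : ℝ => (x : ℂ)) * P) -
            ((Complex.I * (Complex.I * α)) • P +
              (P * (β u).map (fun x : ℝ => (x : ℂ)) -
                (β u).map (fun x : ℝ => (x : ℂ)) * P))
            = (Complex.I * lam) • P - (Complex.I * (Complex.I * α)) • P :=
          add_sub_add_right_eq_sub _ _ _
        rw [this, ← sub_smul]
        congr 1
        ring
      have e3 : ((E u lam * ((Complex.I * (lam - Complex.I * α)) • P)) *ᵥ w u) i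
          = Complex.I * (lam - Complex.I * α) * (E u lam i j * w u j) := by
        rw [Matrix.mul_smul, Matrix.smul_mulVec]
        simp only [Pi.smul_apply, smul_eq_mul]
        congr 1
        rw [← Matrix.mulVec_mulVec]
        have : P *ᵥ w u = fun k => if k = j then w u j else 0 := by
          funext k
          simp [hP, Matrix.mulVec, dotProduct, Matrix.single, Matrix.of_apply,
            ite_and, eq_comm]
        rw [this]
        simp [Matrix.mulVec, dotProduct, mul_ite, Finset.sum_ite_eq, eq_comm]
      calc -((E u lam * Mμ (Complex.I * α)) *ᵥ w u) i + ((E u lam * Mμ lam) *ᵥ w u) i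
          = ((E u lam * (Mμ lam - Mμ (Complex.I * α))) *ᵥ w u) i := by
            rw [Matrix.mul_sub, Matrix.sub_mulVec]
            simp [Pi.sub_apply]
            ring
        _ = Complex.I * (lam - Complex.I * α) * (E u lam i j * w u j) := by
            rw [e2]; exact e3
    -- assemble
    have hX' : DifferentiableAt ℝ (fun u => X u lam i) u :=
      ((hXsmooth lam i).differentiable (by simp)).differentiableAt
    have hYfun : (fun u => Y u lam i) = fun u => X u lam i +
        Complex.I / (lam - Complex.I * α) * ((b i : ℂ) - ∑ k, E u lam i k * w u k) := rfl
    rw [hYfun]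
    rw [fderiv_fun_add hX' (((differentiableAt_const _).fun_sub hS).const_mul _),
      ContinuousLinearMap.add_apply, hXLax u lam j i,
      fderiv_const_mul ((differentiableAt_const _).fun_sub hS) _,
      ContinuousLinearMap.smul_apply, fderiv_const_sub, ContinuousLinearMap.neg_apply, hSd]
    have hC : Complex.I / (lam - Complex.I * α) * (Complex.I * (lam - Complex.I * α)) = -1 := by
      have h2 : Complex.I / (lam - Complex.I * α) * (Complex.I * (lam - Complex.I * α))
          = Complex.I * Complex.I * ((lam - Complex.I * α) / (lam - Complex.I * α)) := by
        ring
      rw [h2, div_self hne, Complex.I_mul_I]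
      ring
    simp only [smul_eq_mul]
    linear_combination (-(E u lam i j * w u j)) * hC
end
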